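/- arXiv:1307.2670 — 6 statements merged into one kernel-verified Lean document; each statement's English description precedes it below -/
import Mathlib

section
/- For every nonnegative integer k and every complex number λ with Re λ > 0, |e_k(λ)| ≤ (|λ|/Re λ)^{k+1} e_k(Re λ), where e_k(λ) = e^λ − Σ_{j=0}^k λ^j/j!. -/
/-- The truncated exponential `e_k(λ) = e^λ − Σ_{j=0}^k λ^j/j!`. -/
noncomputable def ek (k : ℕ) (l : ℂ) : ℂ :=
  Complex.exp l - ∑ j ∈ Finset.range (k + 1), l ^ j / (Nat.factorial j)

/-- The real truncated exponential. -/
noncomputable def ekR (k : ℕ) (x : ℝ) : ℝ :=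
  Real.exp x - ∑ j ∈ Finset.range (k + 1), x ^ j / (Nat.factorial j)

open intervalIntegral Complex


lemma ibp_deriv (k : ℕ) (l : ℂ) (s : ℝ) :
    HasDerivAt (fun t : ℝ => (1 - (t:ℂ)) ^ (k+1) * Complex.exp (l * t))
      (-(k+1) * (1 - (s:ℂ)) ^ k * Complex.exp (l * s)
        + (1 - (s:ℂ)) ^ (k+1) * (l * Complex.exp (l * s))) s := by
  have h1 : HasDerivAt (fun t : ℝ => (1 - (t:ℂ)) ^ (k+1))
      (-(k+1) * (1 - (s:ℂ)) ^ k) s := by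
    have hz : HasDerivAt (fun z : ℂ => (1 - z) ^ (k+1))
        (-(k+1) * (1 - (s:ℂ)) ^ k) (s:ℂ) := by
      have := ((hasDerivAt_id ((s:ℂ))).const_sub 1).pow (k+1)
      refine this.congr_deriv ?_
      simp only [id_eq, Nat.add_sub_cancel]
      push_cast
      ring
    exact hz.comp_ofReal
  have h2 : HasDerivAt (fun t : ℝ => Complex.exp (l * t)) (l * Complex.exp (l * s)) s := by
    have : HasDerivAt (fun z : ℂ => Complex.exp (l * z)) (l * Complex.exp (l * s)) (s:ℂ) := by
      simpa [mul_comm] using ((hasDerivAt_id ((s:ℂ))).const_mul l).cexp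
    exact this.comp_ofReal
  exact h1.mul h2

lemma cont_aux (k : ℕ) (l : ℂ) :
    Continuous fun s : ℝ => (1 - (s:ℂ)) ^ k * Complex.exp (l * s) :=
  ((continuous_const.sub Complex.continuous_ofReal).pow k).mul
    (Complex.continuous_exp.comp (continuous_const.mul Complex.continuous_ofReal))

lemma ek_integral (k : ℕ) (l : ℂ) (hl : l ≠ 0) :
    ek k l = l ^ (k+1) / (Nat.factorial k) *
      ∫ s in (0:ℝ)..1, (1 - (s:ℂ)) ^ k * Complex.exp (l * s) := by
  induction k with
  | zero =>
    have hder : ∀ s ∈ Set.uIcc (0:ℝ) 1, HasDerivAt (fun t : ℝ => Complex.exp (l * t) / l)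
        ((1 - (s:ℂ)) ^ 0 * Complex.exp (l * s)) s := by
      intro s _
      have : HasDerivAt (fun z : ℂ => Complex.exp (l * z) / l) (Complex.exp (l * s)) (s:ℂ) := by
        have := ((hasDerivAt_id ((s:ℂ))).const_mul l).cexp
        simpa [mul_comm] using this.div_const l |>.congr_deriv (by simp only [id_eq]; field_simp)
      simpa using this.comp_ofReal
    have := intervalIntegral.integral_eq_sub_of_hasDerivAt hder
      (by simpa using (cont_aux 0 l).intervalIntegrable 0 1)
    rw [this]
    simp [ek, Finset.sum_range_one]
    field_simp
  | succ k ih =>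
    have hder : ∀ s ∈ Set.uIcc (0:ℝ) 1,
        HasDerivAt (fun t : ℝ => (1 - (t:ℂ)) ^ (k+1) * Complex.exp (l * t))
          (-(k+1) * (1 - (s:ℂ)) ^ k * Complex.exp (l * s)
            + (1 - (s:ℂ)) ^ (k+1) * (l * Complex.exp (l * s))) s :=
      fun s _ => ibp_deriv k l s
    have hc1 : Continuous fun s : ℝ =>
        -(k+1:ℂ) * (1 - (s:ℂ)) ^ k * Complex.exp (l * s) := by
      exact ((continuous_const : Continuous fun _ : ℝ => -(k+1:ℂ)).mul (cont_aux k l)).congr (fun s => by simp only [Pi.mul_apply]; ring)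
    have hc2 : Continuous fun s : ℝ =>
        (1 - (s:ℂ)) ^ (k+1) * (l * Complex.exp (l * s)) := by
      have := (continuous_const : Continuous fun _ : ℝ => l).mul (cont_aux (k+1) l)
      convert this using 1; ext s; simp only [Pi.mul_apply]; ring
    have hFTC := intervalIntegral.integral_eq_sub_of_hasDerivAt hder
      ((hc1.add hc2).intervalIntegrable _ _)
    rw [intervalIntegral.integral_add (hc1.intervalIntegrable _ _)
      (hc2.intervalIntegrable _ _)] at hFTC
    rw [Complex.ofReal_one, Complex.ofReal_zero, sub_self, zero_pow (Nat.succ_ne_zero k),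
      zero_mul, sub_zero, one_pow, zero_sub, mul_zero, Complex.exp_zero, mul_one] at hFTC
    -- hFTC : ∫ -(k+1)(1-s)^k exp + ∫ (1-s)^{k+1} l exp = 0 - 1
    set I : ℂ := ∫ s in (0:ℝ)..1, (1 - (s:ℂ)) ^ k * Complex.exp (l * s) with hI
    set J : ℂ := ∫ s in (0:ℝ)..1, (1 - (s:ℂ)) ^ (k+1) * Complex.exp (l * s) with hJ
    have h1 : (∫ s in (0:ℝ)..1, -(k+1:ℂ) * (1 - (s:ℂ)) ^ k * Complex.exp (l * s))
        = -(k+1:ℂ) * I := by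
      rw [hI, ← intervalIntegral.integral_const_mul]; congr 1; ext s; ring
    have h2 : (∫ s in (0:ℝ)..1, (1 - (s:ℂ)) ^ (k+1) * (l * Complex.exp (l * s)))
        = l * J := by
      rw [hJ, ← intervalIntegral.integral_const_mul]; congr 1; ext s; ring
    rw [h1, h2] at hFTC
    have hJval : l * J = (k+1:ℂ) * I - 1 := by linear_combination hFTC
    have hek : ek (k+1) l = ek k l - l ^ (k+1) / (Nat.factorial (k+1)) := by
      simp [ek, Finset.sum_range_succ]; ring
    rw [hek, ih]
    have hfac : ((Nat.factorial (k+1) : ℂ)) = (k+1:ℂ) * (Nat.factorial k) := by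
      push_cast [Nat.factorial_succ]; ring
    have hfk : (Nat.factorial k : ℂ) ≠ 0 := Nat.cast_ne_zero.2 (Nat.factorial_ne_zero k)
    have hk1 : (k:ℂ)+1 ≠ 0 := Nat.cast_add_one_ne_zero k
    have e1 : l ^ (k+1+1) / ((Nat.factorial (k+1) : ℂ)) * J
        = l ^ (k+1) / ((Nat.factorial (k+1) : ℂ)) * (l * J) := by ring
    rw [e1, hJval, hfac]
    field_simp

theorem statement_4 (k : ℕ) (l : ℂ) (hl : 0 < l.re) :
    ‖ek k l‖ ≤ (‖l‖ / l.re) ^ (k + 1) * ekR k l.re := by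
  have hl0 : l ≠ 0 := fun h => by simp [h] at hl
  set x := l.re with hxdef
  have hrep := ek_integral k l hl0
  have hrepR := ek_integral k (x:ℂ) (by exact_mod_cast hl.ne')
  set R : ℝ := ∫ s in (0:ℝ)..1, (1-s)^k * Real.exp (x*s) with hRdef
  have hRc : (∫ s in (0:ℝ)..1, (1-(s:ℂ))^k * Complex.exp ((x:ℂ)*s)) = (R:ℂ) := by
    rw [hRdef, ← intervalIntegral.integral_ofReal]
    apply intervalIntegral.integral_congr
    intro s _
    push_cast [Complex.ofReal_exp]
    ring
  have hekR : (ekR k x : ℂ) = ek k (x:ℂ) := by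
    rw [ekR, ek]
    push_cast [Complex.ofReal_exp]
    ring
  have hekRval : ekR k x = x^(k+1)/(Nat.factorial k) * R := by
    have : (ekR k x : ℂ) = ((x^(k+1)/(Nat.factorial k) * R : ℝ) : ℂ) := by
      rw [hekR, hrepR, hRc]; push_cast; ring
    exact_mod_cast this
  have h2 : ‖∫ s in (0:ℝ)..1, (1-(s:ℂ))^k * Complex.exp (l*s)‖ ≤ R := by
    have hle := intervalIntegral.norm_integral_le_integral_norm
      (f := fun s : ℝ => (1-(s:ℂ))^k * Complex.exp (l*s)) (μ := MeasureTheory.volume) (by norm_num : (0:ℝ) ≤ 1)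
    refine hle.trans_eq ?_
    apply intervalIntegral.integral_congr
    intro s hs
    rw [Set.uIcc_of_le (by norm_num)] at hs
    have h1s : (0:ℝ) ≤ 1 - s := by linarith [hs.2]
    have : (1 - (s:ℂ)) = ((1-s : ℝ) : ℂ) := by push_cast; ring
    simp only []
    rw [norm_mul, norm_pow, this, Complex.norm_real, Real.norm_eq_abs,
      _root_.abs_of_nonneg h1s, Complex.norm_exp]
    have hre : (l * (s:ℂ)).re = x * s := by simp [Complex.mul_re, hxdef]
    rw [hre]
  have hbound : ‖ek k l‖ ≤ (‖l‖)^(k+1)/(Nat.factorial k) * R := by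
    rw [hrep, norm_mul]
    have h1 : ‖l^(k+1)/(Nat.factorial k)‖
        = (‖l‖)^(k+1)/(Nat.factorial k) := by
      rw [norm_div, norm_pow]; norm_num
    rw [h1]
    exact mul_le_mul_of_nonneg_left h2 (by positivity)
  rw [hekRval]
  have heq : (‖l‖ / x)^(k+1) * (x^(k+1)/(Nat.factorial k) * R)
      = (‖l‖)^(k+1)/(Nat.factorial k) * R := by
    rw [div_pow]
    field_simp
  rw [heq]
  exact hbound
end

section
/- Given 0 < p, a < ∞ and α real, there is a constant C > 0 such that ∫_{ℂⁿ} e^{p Re(z·w̄) − a|w|²} (1+|w|)^{−α} dV(w) ≤ C e^{p²|z|²/(4a)} (1+|z|)^{−α} for all z ∈ ℂⁿ. -/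
open MeasureTheory

noncomputable instance (n : ℕ) : MeasurableSpace (EuclideanSpace ℂ (Fin n)) := borel _
instance (n : ℕ) : BorelSpace (EuclideanSpace ℂ (Fin n)) := ⟨rfl⟩

variable {V : Type*} [NormedAddCommGroup V] [InnerProductSpace ℝ V] [FiniteDimensional ℝ V]
  [MeasurableSpace V] [BorelSpace V]

theorem gauss_int (b : ℝ) (hb : 0 < b) :
    Integrable (fun v : V => Real.exp (-b * ‖v‖^2)) := by
  have h := (GaussianFourier.integrable_cexp_neg_mul_sq_norm_add (V := V) (b := (b:ℂ))
    (by simpa using hb) 0 0).norm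
  refine h.congr (Filter.Eventually.of_forall fun v => ?_)
  simp [Complex.norm_exp]
  left; norm_cast

theorem gauss_poly_int (b β : ℝ) (hb : 0 < b) :
    Integrable (fun v : V => Real.exp (-b * ‖v‖^2) * (1 + ‖v‖) ^ β) := by
  set β' := max β 0 with hβ'
  have hβ'0 : 0 ≤ β' := le_max_right _ _
  refine ((gauss_int (V := V) (b/2) (by linarith)).const_mul
      (Real.exp (β'^2/(2*b)))).mono' ?_ ?_
  · apply Continuous.aestronglyMeasurable
    have h1 : Continuous fun v : V => (1 + ‖v‖) ^ β := by
      apply Continuous.rpow_const (by continuity)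
      intro v; left; positivity
    exact ((Real.continuous_exp.comp (by continuity)).mul h1)
  · refine Filter.Eventually.of_forall fun v => ?_
    have h0 : (0:ℝ) ≤ 1 + ‖v‖ := by positivity
    have h1 : (1 + ‖v‖) ^ β ≤ (1 + ‖v‖) ^ β' := by
      apply Real.rpow_le_rpow_of_exponent_le (by simp [norm_nonneg]) (le_max_left _ _)
    have h2 : (1 + ‖v‖) ^ β' ≤ Real.exp (β' * ‖v‖) := by
      calc (1 + ‖v‖) ^ β' ≤ (Real.exp ‖v‖) ^ β' :=
            Real.rpow_le_rpow h0 (by linarith [Real.add_one_le_exp ‖v‖]) hβ'0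
        _ = Real.exp (β' * ‖v‖) := by
            rw [← Real.exp_mul, mul_comm]
    have h3 : β' * ‖v‖ ≤ (b/2) * ‖v‖^2 + β'^2/(2*b) := by
      rw [← sub_nonneg]
      have he : (b/2) * ‖v‖^2 + β'^2/(2*b) - β' * ‖v‖ = (b*‖v‖-β')^2/(2*b) := by
        field_simp; ring
      rw [he]; positivity
    rw [Real.norm_eq_abs, abs_of_nonneg (by positivity)]
    calc Real.exp (-b * ‖v‖^2) * (1 + ‖v‖) ^ β
        ≤ Real.exp (-b * ‖v‖^2) * Real.exp ((b/2) * ‖v‖^2 + β'^2/(2*b)) := by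
          apply mul_le_mul_of_nonneg_left _ (Real.exp_nonneg _)
          exact le_trans (le_trans h1 h2) (Real.exp_le_exp.2 h3)
      _ = Real.exp (β'^2/(2*b)) * Real.exp (-(b/2) * ‖v‖^2) := by
          rw [← Real.exp_add, ← Real.exp_add]; ring_nf

theorem peetre {W : Type*} [NormedAddCommGroup W] (α : ℝ) (w m : W) :
    (1 + ‖w‖) ^ (-α) ≤ (1 + ‖m‖) ^ (-α) * (1 + ‖w - m‖) ^ |α| := by
  have hw : (0:ℝ) < 1 + ‖w‖ := by positivity
  have hm : (0:ℝ) < 1 + ‖m‖ := by positivity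
  have hd : (0:ℝ) < 1 + ‖w - m‖ := by positivity
  rcases le_or_gt 0 α with hα | hα
  · rw [abs_of_nonneg hα]
    have key : 1 + ‖m‖ ≤ (1 + ‖w‖) * (1 + ‖w - m‖) := by
      have h := norm_sub_norm_le m w
      rw [norm_sub_rev m w] at h
      nlinarith [norm_nonneg w, norm_nonneg (w - m), norm_nonneg m]
    have h2 : (1 + ‖m‖) ^ α ≤ ((1 + ‖w‖) * (1 + ‖w - m‖)) ^ α :=
      Real.rpow_le_rpow hm.le key hα
    rw [Real.mul_rpow hw.le hd.le] at h2
    have hA : (0:ℝ) < (1 + ‖w‖) ^ α := Real.rpow_pos_of_pos hw α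
    have hB : (0:ℝ) < (1 + ‖m‖) ^ α := Real.rpow_pos_of_pos hm α
    have hC : (0:ℝ) < (1 + ‖w - m‖) ^ α := Real.rpow_pos_of_pos hd α
    rw [Real.rpow_neg hw.le, Real.rpow_neg hm.le]
    calc ((1 + ‖w‖) ^ α)⁻¹ = ((1 + ‖m‖) ^ α)⁻¹ * ((1 + ‖m‖) ^ α / (1 + ‖w‖) ^ α) := by
          field_simp
      _ ≤ ((1 + ‖m‖) ^ α)⁻¹ * (1 + ‖w - m‖) ^ α := by
          apply mul_le_mul_of_nonneg_left _ (by positivity)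
          rw [div_le_iff₀ hA]
          calc (1 + ‖m‖) ^ α ≤ (1 + ‖w‖) ^ α * (1 + ‖w - m‖) ^ α := h2
            _ = (1 + ‖w - m‖) ^ α * (1 + ‖w‖) ^ α := mul_comm _ _
  · rw [abs_of_neg hα]
    have key : 1 + ‖w‖ ≤ (1 + ‖m‖) * (1 + ‖w - m‖) := by
      nlinarith [norm_sub_norm_le w m, norm_nonneg m, norm_nonneg (w - m), norm_nonneg w]
    calc (1 + ‖w‖) ^ (-α) ≤ ((1 + ‖m‖) * (1 + ‖w - m‖)) ^ (-α) :=
          Real.rpow_le_rpow hw.le key (by linarith)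
      _ = (1 + ‖m‖) ^ (-α) * (1 + ‖w - m‖) ^ (-α) := Real.mul_rpow hm.le hd.le

theorem statement_9 (n : ℕ) (p a α : ℝ) (hp : 0 < p) (ha : 0 < a) :
    ∃ C : ℝ, 0 < C ∧ ∀ z : EuclideanSpace ℂ (Fin n),
      (∫ w : EuclideanSpace ℂ (Fin n),
          Real.exp (p * (inner ℂ z w : ℂ).re - a * ‖w‖ ^ 2) * (1 + ‖w‖) ^ (-α))
        ≤ C * Real.exp (p ^ 2 * ‖z‖ ^ 2 / (4 * a)) * (1 + ‖z‖) ^ (-α) := by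
  set E := EuclideanSpace ℂ (Fin n)
  set c : ℝ := p / (2 * a) with hcdef
  have hc : 0 < c := by positivity
  set d : ℝ := min c 1 with hddef
  set D : ℝ := max c 1 with hDdef
  have hd : 0 < d := lt_min hc one_pos
  have hD : 0 < D := lt_of_lt_of_le one_pos (le_max_right _ _)
  set C'' : ℝ := max (d ^ (-α)) (D ^ (-α)) with hC''def
  have hC'' : 0 < C'' := lt_of_lt_of_le (Real.rpow_pos_of_pos hd _) (le_max_left _ _)
  set K : ℝ := ∫ u : E, Real.exp (-a * ‖u‖ ^ 2) * (1 + ‖u‖) ^ |α| with hKdef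
  have hK : 0 ≤ K := integral_nonneg fun u => by positivity
  refine ⟨C'' * K + 1, by positivity, fun z => ?_⟩
  set G : ℝ := p ^ 2 * ‖z‖ ^ 2 / (4 * a) with hGdef
  set m : E := ((c : ℂ)) • z with hmdef
  have hmz : ‖m‖ = c * ‖z‖ := by
    rw [hmdef, norm_smul, Complex.norm_real, Real.norm_eq_abs, abs_of_pos hc]
  have hinner : ∀ w : E, (inner ℂ w m : ℂ).re = c * (inner ℂ z w : ℂ).re := by
    intro w
    rw [hmdef, inner_smul_right]
    have h1 : ((c : ℂ) * (inner ℂ w z : ℂ)).re = c * (inner ℂ w z : ℂ).re := by simp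
    rw [h1]
    congr 1
    rw [← inner_conj_symm z w]
    exact Complex.conj_re _
  have hexp : ∀ w : E, p * (inner ℂ z w : ℂ).re - a * ‖w‖ ^ 2
      = G - a * ‖w - m‖ ^ 2 := by
    intro w
    have h1 : ‖w - m‖ ^ 2 = ‖w‖ ^ 2 - 2 * (inner ℂ w m : ℂ).re + ‖m‖ ^ 2 := by
      have := @norm_sub_sq ℂ E _ _ _ w m
      simpa using this
    have h2 : ‖m‖ ^ 2 = c ^ 2 * ‖z‖ ^ 2 := by rw [hmz]; ring
    rw [h1, h2, hinner w, hGdef, hcdef]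
    field_simp
    ring
  have hg : Integrable (fun w : E => Real.exp (-a * ‖w - m‖ ^ 2) * (1 + ‖w - m‖) ^ |α|) :=
    (gauss_poly_int (V := E) a |α| ha).comp_sub_right m
  have hshift : ∫ w : E, Real.exp (-a * ‖w - m‖ ^ 2) * (1 + ‖w - m‖) ^ |α| = K := by
    rw [hKdef]
    exact integral_sub_right_eq_self (fun u : E => Real.exp (-a * ‖u‖ ^ 2) * (1 + ‖u‖) ^ |α|) m
  have hpt : ∀ w : E, Real.exp (p * (inner ℂ z w : ℂ).re - a * ‖w‖ ^ 2) * (1 + ‖w‖) ^ (-α)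
      ≤ Real.exp G * (1 + ‖m‖) ^ (-α) * (Real.exp (-a * ‖w - m‖ ^ 2) * (1 + ‖w - m‖) ^ |α|) := by
    intro w
    rw [hexp w, sub_eq_add_neg, Real.exp_add, ← neg_mul]
    calc Real.exp G * Real.exp (-a * ‖w - m‖ ^ 2) * (1 + ‖w‖) ^ (-α)
        ≤ Real.exp G * Real.exp (-a * ‖w - m‖ ^ 2)
            * ((1 + ‖m‖) ^ (-α) * (1 + ‖w - m‖) ^ |α|) := by
          apply mul_le_mul_of_nonneg_left (peetre α w m) (by positivity)
      _ = Real.exp G * (1 + ‖m‖) ^ (-α)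
            * (Real.exp (-a * ‖w - m‖ ^ 2) * (1 + ‖w - m‖) ^ |α|) := by ring
  have hmb : (1 + ‖m‖) ^ (-α) ≤ C'' * (1 + ‖z‖) ^ (-α) := by
    have hz0 : (0:ℝ) ≤ ‖z‖ := norm_nonneg _
    rcases le_or_gt 0 α with hα | hα
    · have key : d * (1 + ‖z‖) ≤ 1 + ‖m‖ := by
        rw [hmz]
        have h1 : d ≤ 1 := min_le_right _ _
        have h2 : d ≤ c := min_le_left _ _
        nlinarith
      calc (1 + ‖m‖) ^ (-α) ≤ (d * (1 + ‖z‖)) ^ (-α) :=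
            Real.rpow_le_rpow_of_nonpos (by positivity) key (by linarith)
        _ = d ^ (-α) * (1 + ‖z‖) ^ (-α) := Real.mul_rpow hd.le (by positivity)
        _ ≤ C'' * (1 + ‖z‖) ^ (-α) := by
            apply mul_le_mul_of_nonneg_right (le_max_left _ _) (by positivity)
    · have key : 1 + ‖m‖ ≤ D * (1 + ‖z‖) := by
        rw [hmz]
        have h1 : 1 ≤ D := le_max_right _ _
        have h2 : c ≤ D := le_max_left _ _
        nlinarith
      calc (1 + ‖m‖) ^ (-α) ≤ (D * (1 + ‖z‖)) ^ (-α) :=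
            Real.rpow_le_rpow (by positivity) key (by linarith)
        _ = D ^ (-α) * (1 + ‖z‖) ^ (-α) := Real.mul_rpow hD.le (by positivity)
        _ ≤ C'' * (1 + ‖z‖) ^ (-α) := by
            apply mul_le_mul_of_nonneg_right (le_max_right _ _) (by positivity)
  calc (∫ w : E, Real.exp (p * (inner ℂ z w : ℂ).re - a * ‖w‖ ^ 2) * (1 + ‖w‖) ^ (-α))
      ≤ ∫ w : E, Real.exp G * (1 + ‖m‖) ^ (-α)
          * (Real.exp (-a * ‖w - m‖ ^ 2) * (1 + ‖w - m‖) ^ |α|) := by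
        refine integral_mono_of_nonneg (Filter.Eventually.of_forall fun w => by positivity)
          (hg.const_mul _) (Filter.Eventually.of_forall hpt)
    _ = Real.exp G * (1 + ‖m‖) ^ (-α) * K := by
        rw [integral_const_mul, hshift]
    _ ≤ Real.exp G * (C'' * (1 + ‖z‖) ^ (-α)) * K := by
        apply mul_le_mul_of_nonneg_right _ hK
        exact mul_le_mul_of_nonneg_left hmb (Real.exp_nonneg _)
    _ ≤ (C'' * K + 1) * Real.exp G * (1 + ‖z‖) ^ (-α) := by
        have h1 : (0:ℝ) < Real.exp G * (1 + ‖z‖) ^ (-α) := by positivity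
        nlinarith [Real.exp_pos G, Real.rpow_pos_of_pos (show (0:ℝ) < 1 + ‖z‖ by positivity) (-α)]
end

section
/- Given 0 < p, a, ε < ∞ and α real with α ≠ 2n, there is a constant C > 0 such that ∫_{ℂⁿ} e^{pε|z||w| − a|w|²} (1+|w|)^{−α} dV(w) ≤ C e^{p²ε²|z|²/(4a)} (1 + |z|^{2n−α}) for all z ∈ ℂⁿ. -/
open MeasureTheory

open Real Set in
private lemma aux_ratio (β a r c : ℝ) (ha : 0 < a) (hr : 0 ≤ r) (hc : 0 ≤ c) :
    (1+r) ^ β ≤ Real.exp (β^2/(2*a)) * (1+c) ^ β * Real.exp (a/2 * (r-c)^2) := by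
  have h1r : (0:ℝ) < 1 + r := by linarith
  have h1c : (0:ℝ) < 1 + c := by linarith
  set u := |r - c| with hu
  have hu0 : 0 ≤ u := abs_nonneg _
  have hru : 1 + r ≤ (1+c) * (1+u) := by
    have h := le_abs_self (r - c); nlinarith
  have hcu : 1 + c ≤ (1+r) * (1+u) := by
    have h : c - r ≤ u := by rw [hu, abs_sub_comm]; exact le_abs_self _
    nlinarith
  have hkey : (1+r) ^ β ≤ (1+c) ^ β * (1+u) ^ |β| := by
    rcases le_or_gt 0 β with hβ | hβ
    · calc (1+r)^β ≤ ((1+c)*(1+u))^β := Real.rpow_le_rpow h1r.le hru hβ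
        _ = (1+c)^β * (1+u)^β := Real.mul_rpow h1c.le (by linarith)
        _ = (1+c)^β * (1+u)^|β| := by rw [abs_of_nonneg hβ]
    · have h := Real.rpow_le_rpow_of_nonpos h1c hcu hβ.le
      rw [Real.mul_rpow h1r.le (by linarith)] at h
      have h2 : (1+r)^β * ((1+u)^β * (1+u)^(-β)) ≤ (1+c)^β * (1+u)^(-β) := by
        rw [← mul_assoc]
        exact mul_le_mul_of_nonneg_right h (Real.rpow_nonneg (by linarith) _)
      rw [← Real.rpow_add (by linarith), add_neg_cancel, Real.rpow_zero, mul_one] at h2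
      rw [abs_of_neg hβ]
      exact h2
  have hexp : (1+u) ^ |β| ≤ Real.exp (β^2/(2*a)) * Real.exp (a/2 * (r-c)^2) := by
    have h1 : (1+u)^|β| ≤ Real.exp (|β| * u) := by
      calc (1+u)^|β| ≤ (Real.exp u)^|β| :=
            Real.rpow_le_rpow (by linarith) (by linarith [Real.add_one_le_exp u]) (abs_nonneg β)
        _ = Real.exp (u * |β|) := (Real.exp_mul u |β|).symm
        _ = Real.exp (|β| * u) := by rw [mul_comm]
    have h3 : 2*a*((abs β)*u) ≤ β^2 + (a*u)^2 := by nlinarith [sq_nonneg (abs β - a*u), sq_abs β]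
    have h2 : |β| * u ≤ β^2/(2*a) + a/2 * (r-c)^2 := by
      have hsq : (r-c)^2 = u^2 := (sq_abs _).symm
      rw [hsq]
      rw [div_add' _ _ _ (by positivity), le_div_iff₀ (by positivity)]
      nlinarith
    calc (1+u)^|β| ≤ Real.exp (|β| * u) := h1
      _ ≤ Real.exp (β^2/(2*a) + a/2 * (r-c)^2) := Real.exp_le_exp.2 h2
      _ = _ := Real.exp_add _ _
  calc (1+r)^β ≤ (1+c)^β * (1+u)^|β| := hkey
    _ ≤ (1+c)^β * (Real.exp (β^2/(2*a)) * Real.exp (a/2 * (r-c)^2)) :=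
        mul_le_mul_of_nonneg_left hexp (Real.rpow_nonneg h1c.le β)
    _ = _ := by ring

open Real Set in
private lemma aux_poly (lam β : ℝ) (hlam : 0 < lam) :
    ∃ C : ℝ, 0 < C ∧ ∀ t : ℝ, 0 ≤ t → (1 + lam*t) ^ β ≤ C * (1 + t ^ (β+1)) := by
  rcases lt_or_ge β 0 with hβ | hβ
  · refine ⟨1, one_pos, fun t ht => ?_⟩
    have h1 : (1+lam*t)^β ≤ 1 :=
      Real.rpow_le_one_of_one_le_of_nonpos (by nlinarith) hβ.le
    have h2 : 0 ≤ t^(β+1) := Real.rpow_nonneg ht _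
    linarith
  · refine ⟨(1+lam)^β * 2^(β+1), by positivity, fun t ht => ?_⟩
    have key1 : (1+lam*t)^β ≤ (1+lam)^β * (1+t)^β := by
      calc (1+lam*t)^β ≤ ((1+lam)*(1+t))^β :=
            Real.rpow_le_rpow (by positivity) (by nlinarith) hβ
        _ = _ := Real.mul_rpow (by positivity) (by positivity)
    have key2 : (1+t)^β ≤ (1+t)^(β+1) :=
      Real.rpow_le_rpow_of_exponent_le (by linarith) (by linarith)
    have key3 : (1+t)^(β+1) ≤ 2^(β+1) * (1 + t^(β+1)) := by
      have h2p : (0:ℝ) ≤ 2^(β+1) := Real.rpow_nonneg (by norm_num) _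
      have htp : (0:ℝ) ≤ t^(β+1) := Real.rpow_nonneg ht _
      rcases le_total t 1 with h | h
      · calc (1+t)^(β+1) ≤ 2^(β+1) :=
              Real.rpow_le_rpow (by linarith) (by linarith) (by linarith)
          _ ≤ 2^(β+1) * (1 + t^(β+1)) := le_mul_of_one_le_right h2p (by linarith)
      · calc (1+t)^(β+1) ≤ (2*t)^(β+1) :=
              Real.rpow_le_rpow (by linarith) (by linarith) (by linarith)
          _ = 2^(β+1) * t^(β+1) := Real.mul_rpow (by norm_num) ht
          _ ≤ 2^(β+1) * (1 + t^(β+1)) := mul_le_mul_of_nonneg_left (by linarith) h2p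
    have hnn : (0:ℝ) ≤ (1+lam)^β := Real.rpow_nonneg (by positivity) _
    calc (1+lam*t)^β ≤ (1+lam)^β * (1+t)^β := key1
      _ ≤ (1+lam)^β * (1+t)^(β+1) := mul_le_mul_of_nonneg_left key2 hnn
      _ ≤ (1+lam)^β * (2^(β+1) * (1 + t^(β+1))) := mul_le_mul_of_nonneg_left key3 hnn
      _ = (1+lam)^β * 2^(β+1) * (1 + t^(β+1)) := by ring

open Real Set in
private lemma aux_gauss_int (b c : ℝ) (hb : 0 < b) :
    Integrable (fun r : ℝ => Real.exp (-b*(r-c)^2)) :=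
  (integrable_exp_neg_mul_sq hb).comp_sub_right c

open Real Set in
private lemma aux_gauss_le (b c : ℝ) (hb : 0 < b) :
    ∫ r in Ioi (0:ℝ), Real.exp (-b*(r-c)^2) ≤ Real.sqrt (π/b) := by
  have hi := aux_gauss_int b c hb
  have h1 : ∫ r in Ioi (0:ℝ), Real.exp (-b*(r-c)^2) ≤ ∫ r : ℝ, Real.exp (-b*(r-c)^2) :=
    setIntegral_le_integral hi (Filter.Eventually.of_forall fun x => (Real.exp_pos _).le)
  have h2 : ∫ r : ℝ, Real.exp (-b*(r-c)^2) = ∫ r : ℝ, Real.exp (-b*r^2) :=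
    integral_sub_right_eq_self (fun r : ℝ => Real.exp (-b*r^2)) c
  rw [h2, integral_gaussian] at h1
  exact h1

open Real Set in
theorem statement_10 (n : ℕ) (p a ε α : ℝ) (hp : 0 < p) (ha : 0 < a) (hε : 0 < ε)
    (hα : α ≠ 2 * n) :
    ∃ C : ℝ, 0 < C ∧ ∀ z : EuclideanSpace ℂ (Fin n),
      (∫ w : EuclideanSpace ℂ (Fin n),
          Real.exp (p * ε * ‖z‖ * ‖w‖ - a * ‖w‖ ^ 2) * (1 + ‖w‖) ^ (-α))
        ≤ C * Real.exp (p ^ 2 * ε ^ 2 * ‖z‖ ^ 2 / (4 * a)) *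
            (1 + ‖z‖ ^ (2 * (n : ℝ) - α)) := by
  rcases Nat.eq_zero_or_pos n with hn | hn
  · subst hn
    refine ⟨1, one_pos, fun z => ?_⟩
    have hz : ‖z‖ = 0 := by rw [Subsingleton.elim z 0, norm_zero]
    have hint : ∀ w : EuclideanSpace ℂ (Fin 0),
        Real.exp (p * ε * ‖z‖ * ‖w‖ - a * ‖w‖ ^ 2) * (1 + ‖w‖) ^ (-α) = 1 := by
      intro w
      have hw : ‖w‖ = 0 := by rw [Subsingleton.elim w 0, norm_zero]
      rw [hz, hw]; norm_num
    have hvol : (volume : Measure (EuclideanSpace ℂ (Fin 0))) Set.univ = 1 := by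
      have h : (volume : Measure (EuclideanSpace ℂ (Fin 0))) =
          (stdOrthonormalBasis ℝ (EuclideanSpace ℂ (Fin 0))).toBasis.addHaar := rfl
      rw [h]
      have hpar : (parallelepiped ((stdOrthonormalBasis ℝ
          (EuclideanSpace ℂ (Fin 0))).toBasis : _ → EuclideanSpace ℂ (Fin 0))) = Set.univ := by
        apply Set.eq_univ_of_forall
        intro x
        rw [mem_parallelepiped_iff]
        exact ⟨0, by simp, by simp [Subsingleton.elim x 0]⟩
      rw [← hpar]
      exact Module.Basis.addHaar_self _
    have hL : (∫ w : EuclideanSpace ℂ (Fin 0),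
        Real.exp (p * ε * ‖z‖ * ‖w‖ - a * ‖w‖ ^ 2) * (1 + ‖w‖) ^ (-α)) = 1 := by
      simp only [hint, integral_const, smul_eq_mul, mul_one, measureReal_def, hvol, ENNReal.toReal_one]
    rw [hL, hz]
    have hne : 2 * ((0:ℕ):ℝ) - α ≠ 0 := by
      simpa using fun h => hα (by push_cast; linarith)
    rw [Real.zero_rpow hne]
    norm_num
  · -- n ≥ 1
    haveI : Nonempty (Fin n) := ⟨⟨0, hn⟩⟩
    have hrank : Module.finrank ℝ (EuclideanSpace ℂ (Fin n)) = 2*n := by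
      rw [← Module.finrank_mul_finrank ℝ ℂ (EuclideanSpace ℂ (Fin n)),
        Complex.finrank_real_complex, finrank_euclideanSpace, Fintype.card_fin]
    set lam := p*ε/(2*a) with hlamdef
    have hlam : 0 < lam := by positivity
    set β : ℝ := 2*(n:ℝ) - α - 1 with hβdef
    obtain ⟨C₃, hC₃pos, hC₃⟩ := aux_poly lam β hlam
    set V₁ := (volume (Metric.ball (0:EuclideanSpace ℂ (Fin n)) 1)).toReal with hV₁def
    have hV₁ : 0 ≤ V₁ := ENNReal.toReal_nonneg
    set K := Real.exp (β^2/(2*a)) with hKdef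
    set G := Real.sqrt (π/(a/2)) with hGdef
    have hG : 0 ≤ G := Real.sqrt_nonneg _
    set C0 : ℝ := (2*(n:ℝ)) * V₁ * (K * G * C₃) with hC0def
    refine ⟨max 1 C0, lt_of_lt_of_le one_pos (le_max_left _ _), fun z => ?_⟩
    set t := ‖z‖ with htdef
    have ht : 0 ≤ t := norm_nonneg z
    set c := lam * t with hcdef
    have hc : 0 ≤ c := by positivity
    set B := p ^ 2 * ε ^ 2 * t ^ 2 / (4 * a) with hBdef
    -- polar coordinates
    have hpolar := MeasureTheory.integral_fun_norm_addHaar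
      (volume : Measure (EuclideanSpace ℂ (Fin n)))
      (fun r : ℝ => Real.exp (p * ε * t * r - a * r ^ 2) * (1 + r) ^ (-α))
    rw [hrank] at hpolar
    simp only [nsmul_eq_mul, smul_eq_mul] at hpolar
    push_cast at hpolar
    -- pointwise bound on (0, ∞)
    have hptwise : ∀ r ∈ Ioi (0:ℝ),
        r ^ (2*n-1) * (Real.exp (p * ε * t * r - a * r ^ 2) * (1 + r) ^ (-α)) ≤
          Real.exp B * (K * (1+c)^β) * Real.exp (-(a/2)*(r-c)^2) := by
      intro r hr
      rw [mem_Ioi] at hr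
      have h1r : (0:ℝ) < 1 + r := by linarith
      have e1 : p*ε*t*r - a*r^2 = B - a*(r-c)^2 := by
        rw [hBdef, hcdef, hlamdef]; field_simp; ring
      have e3 : ((2*n-1 : ℕ) : ℝ) = 2*(n:ℝ) - 1 := by
        have h1 : 1 ≤ 2*n := by omega
        push_cast [h1]; ring
      have e2 : r ^ (2*n-1) ≤ (1+r) ^ (2*(n:ℝ)-1) := by
        rw [← e3, Real.rpow_natCast]
        exact pow_le_pow_left₀ hr.le (by linarith) _
      have e4 : (1+r)^(2*(n:ℝ)-1) * (1+r)^(-α) = (1+r)^β := by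
        rw [← Real.rpow_add h1r, hβdef]; congr 1; ring
      have hcomb : Real.exp (a/2 * (r-c)^2) * Real.exp (-(a*(r-c)^2)) =
          Real.exp (-(a/2)*(r-c)^2) := by
        rw [← Real.exp_add]; congr 1; ring
      calc r ^ (2*n-1) * (Real.exp (p * ε * t * r - a * r ^ 2) * (1 + r) ^ (-α))
          = (r ^ (2*n-1) * (1+r)^(-α)) * (Real.exp B * Real.exp (-(a*(r-c)^2))) := by
            rw [e1, sub_eq_add_neg, Real.exp_add]; ring
        _ ≤ ((1+r)^(2*(n:ℝ)-1) * (1+r)^(-α)) * (Real.exp B * Real.exp (-(a*(r-c)^2))) := by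
            apply mul_le_mul_of_nonneg_right
              (mul_le_mul_of_nonneg_right e2 (Real.rpow_nonneg h1r.le _))
            positivity
        _ = (1+r)^β * Real.exp (-(a*(r-c)^2)) * Real.exp B := by rw [e4]; ring
        _ ≤ (Real.exp (β^2/(2*a)) * (1+c)^β * Real.exp (a/2*(r-c)^2)) *
              Real.exp (-(a*(r-c)^2)) * Real.exp B := by
            apply mul_le_mul_of_nonneg_right
              (mul_le_mul_of_nonneg_right (aux_ratio β a r c ha hr.le hc) (Real.exp_pos _).le)
              (Real.exp_pos _).le
        _ = Real.exp B * (K * (1+c)^β) *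
              (Real.exp (a/2*(r-c)^2) * Real.exp (-(a*(r-c)^2))) := by rw [hKdef]; ring
        _ = Real.exp B * (K * (1+c)^β) * Real.exp (-(a/2)*(r-c)^2) := by rw [hcomb]
    -- integrability of dominating function
    have ha2 : (0:ℝ) < a/2 := by linarith
    have hIG : Integrable
        (fun r : ℝ => Real.exp B * (K * (1+c)^β) * Real.exp (-(a/2)*(r-c)^2))
        (volume.restrict (Ioi 0)) :=
      ((aux_gauss_int (a/2) c ha2).restrict (s := Ioi 0)).const_mul _
    have hmono : (∫ r in Ioi (0:ℝ),
        r ^ (2*n-1) * (Real.exp (p * ε * t * r - a * r ^ 2) * (1 + r) ^ (-α))) ≤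
        ∫ r in Ioi (0:ℝ), Real.exp B * (K * (1+c)^β) * Real.exp (-(a/2)*(r-c)^2) := by
      apply integral_mono_of_nonneg _ hIG
      · filter_upwards [ae_restrict_mem measurableSet_Ioi] with r hr
        exact hptwise r hr
      · filter_upwards [ae_restrict_mem measurableSet_Ioi] with r hr
        rw [mem_Ioi] at hr
        have h1r : (0:ℝ) < 1 + r := by linarith
        positivity
    have hgauss : (∫ r in Ioi (0:ℝ),
        Real.exp B * (K * (1+c)^β) * Real.exp (-(a/2)*(r-c)^2)) ≤
        Real.exp B * (K * (1+c)^β) * G := by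
      rw [MeasureTheory.integral_const_mul]
      exact mul_le_mul_of_nonneg_left (aux_gauss_le (a/2) c ha2)
        (mul_nonneg (Real.exp_pos _).le
          (mul_nonneg (Real.exp_pos _).le (Real.rpow_nonneg (by linarith) β)))
    have hβ1 : β + 1 = 2*(n:ℝ) - α := by rw [hβdef]; ring
    have hpoly : (1+c)^β ≤ C₃ * (1 + t ^ (2*(n:ℝ) - α)) := by
      rw [← hβ1]; exact hC₃ t ht
    have hQ : (0:ℝ) ≤ 1 + t ^ (2*(n:ℝ) - α) := by
      have := Real.rpow_nonneg ht (2*(n:ℝ) - α); linarith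
    -- assemble
    rw [hpolar]
    calc 2*(n:ℝ) * (V₁ * ∫ r in Ioi (0:ℝ),
          r ^ (2*n-1) * (Real.exp (p * ε * t * r - a * r ^ 2) * (1 + r) ^ (-α)))
        ≤ 2*(n:ℝ) * (V₁ * (Real.exp B * (K * (1+c)^β) * G)) := by
          apply mul_le_mul_of_nonneg_left (mul_le_mul_of_nonneg_left
            (le_trans hmono hgauss) hV₁) (by positivity)
      _ ≤ 2*(n:ℝ) * (V₁ * (Real.exp B * (K * (C₃ * (1 + t ^ (2*(n:ℝ) - α)))) * G)) := by
          apply mul_le_mul_of_nonneg_left (mul_le_mul_of_nonneg_left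
            (mul_le_mul_of_nonneg_right (mul_le_mul_of_nonneg_left
              (mul_le_mul_of_nonneg_left hpoly (Real.exp_pos _).le)
              (Real.exp_pos _).le) hG) hV₁) (by positivity)
      _ = C0 * Real.exp B * (1 + t ^ (2*(n:ℝ) - α)) := by rw [hC0def]; ring
      _ ≤ max 1 C0 * Real.exp B * (1 + t ^ (2*(n:ℝ) - α)) := by
          apply mul_le_mul_of_nonneg_right
            (mul_le_mul_of_nonneg_right (le_max_right 1 C0) (Real.exp_pos _).le) hQ
end

section
/- Given α real and a, b > 0, there is a constant C > 0 such that ∫_0^1 t^{a−1} (1−t)^{b−1} e^{t²|z|²/2} (1+t|z|)^α dt ≤ C e^{|z|²/2} (1+|z|)^{α−2b} for all z ∈ ℂⁿ. -/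
open MeasureTheory Set Real

private lemma aux_int_left {a : ℝ} (ha : 0 < a) :
    IntegrableOn (fun t : ℝ => t ^ (a - 1)) (Ioo (0:ℝ) 1) :=
  ((intervalIntegral.intervalIntegrable_rpow' (by linarith : (-1:ℝ) < a - 1)
    (a := 0) (b := 1)).1).mono_set Ioo_subset_Ioc_self

private lemma aux_int_right {b : ℝ} (hb : 0 < b) :
    IntegrableOn (fun t : ℝ => (1 - t) ^ (b - 1)) (Ioo (0:ℝ) 1) := by
  have h := ((intervalIntegral.intervalIntegrable_rpow' (by linarith : (-1:ℝ) < b - 1)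
    (a := 0) (b := 1)).comp_sub_left 1).symm
  simp only [sub_zero, sub_self] at h
  exact (h.1).mono_set Ioo_subset_Ioc_self

private lemma aux_val_rpow {b : ℝ} (hb : 0 < b) :
    ∫ s in Ioo (0:ℝ) 1, s ^ (b - 1) = 1 / b := by
  rw [← integral_Ioc_eq_integral_Ioo, ← intervalIntegral.integral_of_le zero_le_one,
    integral_rpow (Or.inl (by linarith)), zero_rpow (by linarith), one_rpow]
  ring_nf

private lemma aux_reflect (F : ℝ → ℝ) :
    ∫ t in Ioo (0:ℝ) 1, F (1 - t) = ∫ s in Ioo (0:ℝ) 1, F s := by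
  rw [← integral_Ioc_eq_integral_Ioo, ← intervalIntegral.integral_of_le zero_le_one,
    intervalIntegral.integral_comp_sub_left F 1]
  norm_num
  rw [intervalIntegral.integral_of_le zero_le_one, integral_Ioc_eq_integral_Ioo]

/-- On `[1/2, 1]`, `x ^ (r - 1)` is bounded by `max 1 (2 ^ (1 - r))`. -/
private lemma aux_rpow_bound {x r : ℝ} (h1 : 1/2 ≤ x) (h2 : x ≤ 1) :
    x ^ (r - 1) ≤ max 1 ((2:ℝ) ^ (1 - r)) := by
  rcases le_or_gt 1 r with h | h
  · exact le_trans (Real.rpow_le_one (by linarith) h2 (by linarith)) (le_max_left _ _)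
  · have h3 : x ^ (r - 1) ≤ ((1:ℝ)/2) ^ (r - 1) :=
      Real.rpow_le_rpow_of_nonpos (by norm_num) h1 (by linarith)
    have h4 : ((1:ℝ)/2) ^ (r - 1) = (2:ℝ) ^ (1 - r) := by
      rw [one_div, Real.inv_rpow (by norm_num : (0:ℝ) ≤ 2),
        ← Real.rpow_neg (by norm_num : (0:ℝ) ≤ 2), neg_sub]
    exact (h3.trans_eq h4).trans (le_max_right _ _)

set_option maxHeartbeats 2000000 in
theorem statement_12 (n : ℕ) (α a b : ℝ) (ha : 0 < a) (hb : 0 < b) :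
    ∃ C : ℝ, 0 < C ∧ ∀ z : EuclideanSpace ℂ (Fin n),
      (∫ t in Set.Ioo (0:ℝ) 1,
          t ^ (a - 1) * (1 - t) ^ (b - 1) * Real.exp (t ^ 2 * ‖z‖ ^ 2 / 2) *
            (1 + t * ‖z‖) ^ α)
        ≤ C * Real.exp (‖z‖ ^ 2 / 2) * (1 + ‖z‖) ^ (α - 2 * b) := by
  set q : ℝ := max α 0 - α + 2 * b with hq
  have hq0 : 0 ≤ q := by
    have := le_max_left α 0; simp only [hq]; linarith
  set M : ℝ := max 1 ((2:ℝ) ^ (1 - a)) with hM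
  set cα : ℝ := max 1 ((2:ℝ) ^ (-α)) with hcα
  set C₂ : ℝ := max ((2:ℝ) ^ (2*b) / b) (Real.Gamma b * (2:ℝ) ^ (3*b)) with hC₂
  have hM1 : (1:ℝ) ≤ M := le_max_left _ _
  have hc1 : (1:ℝ) ≤ cα := le_max_left _ _
  have hC₂0 : 0 < C₂ := lt_of_lt_of_le (by positivity) (le_max_left _ _)
  set B : ℝ := ∫ t in Ioo (0:ℝ) 1, t ^ (a-1) * (1-t) ^ (b-1) with hBdef
  have hB0 : 0 ≤ B := by
    rw [hBdef]
    refine setIntegral_nonneg measurableSet_Ioo fun t ht => ?_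
    exact mul_nonneg (Real.rpow_nonneg ht.1.le _) (Real.rpow_nonneg (by linarith [ht.2]) _)
  -- integrability of the beta-type integrand
  have hmeas : Measurable fun t : ℝ => t ^ (a-1) * (1-t) ^ (b-1) := by fun_prop
  have huInt : IntegrableOn (fun t : ℝ => t ^ (a-1) * (1-t) ^ (b-1)) (Ioo (0:ℝ) 1) := by
    set N : ℝ := max M (max 1 ((2:ℝ) ^ (1 - b))) with hN
    have hN0 : 0 ≤ N := le_trans (le_trans zero_le_one hM1) (le_max_left _ _)
    refine Integrable.mono' (g := fun t => N * (t ^ (a-1) + (1-t) ^ (b-1)))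
      ((((aux_int_left ha).add (aux_int_right hb))).const_mul N)
      hmeas.aestronglyMeasurable ?_
    refine (ae_restrict_iff' measurableSet_Ioo).mpr (ae_of_all _ fun t ht => ?_)
    obtain ⟨ht0, ht1⟩ := ht
    have ha0 : 0 ≤ t ^ (a-1) := Real.rpow_nonneg ht0.le _
    have hb0 : 0 ≤ (1-t) ^ (b-1) := Real.rpow_nonneg (by linarith) _
    rw [Real.norm_eq_abs, abs_of_nonneg (mul_nonneg ha0 hb0)]
    rcases le_or_gt t (1/2) with h | h
    · have : (1-t) ^ (b-1) ≤ max 1 ((2:ℝ) ^ (1 - b)) :=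
        aux_rpow_bound (by linarith) (by linarith)
      have hNle : (1-t) ^ (b-1) ≤ N := this.trans (le_max_right _ _)
      calc t ^ (a-1) * (1-t) ^ (b-1) ≤ t ^ (a-1) * N := mul_le_mul_of_nonneg_left hNle ha0
        _ ≤ N * (t ^ (a-1) + (1-t) ^ (b-1)) := by nlinarith
    · have : t ^ (a-1) ≤ M := aux_rpow_bound (by linarith) ht1.le
      have hNle : t ^ (a-1) ≤ N := this.trans (le_max_left _ _)
      calc t ^ (a-1) * (1-t) ^ (b-1) ≤ N * (1-t) ^ (b-1) := mul_le_mul_of_nonneg_right hNle hb0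
        _ ≤ N * (t ^ (a-1) + (1-t) ^ (b-1)) := by nlinarith
  refine ⟨B * Real.exp (2*q^2/3) + M * cα * C₂ + 1, ?_, fun z => ?_⟩
  · have h1 : 0 ≤ B * Real.exp (2*q^2/3) := mul_nonneg hB0 (Real.exp_nonneg _)
    nlinarith [mul_pos (mul_pos (lt_of_lt_of_le one_pos hM1) (lt_of_lt_of_le one_pos hc1)) hC₂0]
  set R : ℝ := ‖z‖ with hR
  have hR0 : 0 ≤ R := norm_nonneg z
  have h1R : (0:ℝ) < 1 + R := by linarith
  set c : ℝ := R^2/2 with hc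
  have hc0 : 0 ≤ c := by positivity
  set P : ℝ := (1 + R) ^ (α - 2*b) with hP
  have hP0 : 0 < P := Real.rpow_pos_of_pos h1R _
  set E : ℝ := Real.exp (R^2/2) with hE
  set K₁ : ℝ := Real.exp (R^2/8) * (1+R) ^ (max α 0) with hK₁
  set K₂ : ℝ := M * cα * E * (1+R) ^ α with hK₂
  have hK₁0 : 0 ≤ K₁ := mul_nonneg (Real.exp_nonneg _) (Real.rpow_nonneg h1R.le _)
  have hK₂0 : 0 ≤ K₂ := by
    have hm : (0:ℝ) ≤ M * cα := by nlinarith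
    exact mul_nonneg (mul_nonneg hm (Real.exp_nonneg _)) (Real.rpow_nonneg h1R.le _)
  have hvInt : IntegrableOn (fun t : ℝ => (1-t) ^ (b-1) * Real.exp (-(c * (1-t))))
      (Ioo (0:ℝ) 1) := by
    refine Integrable.mono' (aux_int_right hb)
      (Measurable.aestronglyMeasurable (by fun_prop)) ?_
    refine (ae_restrict_iff' measurableSet_Ioo).mpr (ae_of_all _ fun t ht => ?_)
    obtain ⟨ht0, ht1⟩ := ht
    have hb0 : 0 ≤ (1-t) ^ (b-1) := Real.rpow_nonneg (by linarith) _
    have hexp1 : Real.exp (-(c * (1-t))) ≤ 1 := by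
      calc Real.exp (-(c * (1-t))) ≤ Real.exp 0 := Real.exp_le_exp.mpr (by nlinarith)
        _ = 1 := Real.exp_zero
    rw [Real.norm_eq_abs, abs_of_nonneg (mul_nonneg hb0 (Real.exp_nonneg _))]
    exact mul_le_of_le_one_right hb0 hexp1
  set J : ℝ := ∫ t in Ioo (0:ℝ) 1, (1-t) ^ (b-1) * Real.exp (-(c * (1-t))) with hJdef
  -- Step 1: pointwise bound and integral comparison
  have key : (∫ t in Ioo (0:ℝ) 1,
      t ^ (a - 1) * (1 - t) ^ (b - 1) * Real.exp (t ^ 2 * R ^ 2 / 2) * (1 + t * R) ^ α)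
      ≤ K₁ * B + K₂ * J := by
    have hgInt : Integrable
        (fun t => K₁ * (t ^ (a-1) * (1-t) ^ (b-1))
          + K₂ * ((1-t) ^ (b-1) * Real.exp (-(c * (1-t)))))
        (volume.restrict (Ioo (0:ℝ) 1)) := (huInt.const_mul K₁).add (hvInt.const_mul K₂)
    have hmono := integral_mono_of_nonneg
      (f := fun t => t ^ (a - 1) * (1 - t) ^ (b - 1) * Real.exp (t ^ 2 * R ^ 2 / 2)
        * (1 + t * R) ^ α)
      (g := fun t => K₁ * (t ^ (a-1) * (1-t) ^ (b-1))
        + K₂ * ((1-t) ^ (b-1) * Real.exp (-(c * (1-t)))))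
      (μ := volume.restrict (Ioo (0:ℝ) 1)) ?_ hgInt ?_
    · refine hmono.trans (le_of_eq ?_)
      rw [integral_add (huInt.const_mul K₁) (hvInt.const_mul K₂),
        integral_const_mul, integral_const_mul]
    · refine (ae_restrict_iff' measurableSet_Ioo).mpr (ae_of_all _ fun t ht => ?_)
      obtain ⟨ht0, ht1⟩ := ht
      have hg1 : 0 ≤ (1+t*R) := by nlinarith [mul_nonneg ht0.le hR0]
      exact mul_nonneg (mul_nonneg (mul_nonneg (Real.rpow_nonneg ht0.le _)
        (Real.rpow_nonneg (by linarith) _)) (Real.exp_nonneg _)) (Real.rpow_nonneg hg1 _)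
    · refine (ae_restrict_iff' measurableSet_Ioo).mpr (ae_of_all _ fun t ht => ?_)
      obtain ⟨ht0, ht1⟩ := ht
      have h1t : (0:ℝ) < 1 - t := by linarith
      have htR : 0 ≤ t * R := mul_nonneg ht0.le hR0
      have hg1 : (1:ℝ) ≤ 1 + t * R := by linarith
      have hu0 : 0 ≤ t ^ (a-1) * (1-t) ^ (b-1) :=
        mul_nonneg (Real.rpow_nonneg ht0.le _) (Real.rpow_nonneg h1t.le _)
      have hv0 : 0 ≤ (1-t) ^ (b-1) * Real.exp (-(c * (1-t))) :=
        mul_nonneg (Real.rpow_nonneg h1t.le _) (Real.exp_nonneg _)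
      rcases le_or_gt t (1/2) with htle | htgt
      · -- small t : dominate by the beta term
        have hexp : Real.exp (t^2*R^2/2) ≤ Real.exp (R^2/8) :=
          Real.exp_le_exp.mpr (by
            nlinarith [mul_nonneg (show (0:ℝ) ≤ 1/4 - t^2 by nlinarith) (sq_nonneg R)])
        have hpow : (1+t*R) ^ α ≤ (1+R) ^ (max α 0) := by
          rcases le_or_gt 0 α with hα | hα
          · rw [max_eq_left hα]
            exact Real.rpow_le_rpow (by linarith) (by nlinarith) hα
          · exact le_trans (Real.rpow_le_one_of_one_le_of_nonpos hg1 hα.le)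
              (Real.one_le_rpow (by linarith) (le_max_right α 0))
        have step : t ^ (a-1) * (1-t) ^ (b-1) * Real.exp (t^2*R^2/2) * (1+t*R) ^ α
            ≤ t ^ (a-1) * (1-t) ^ (b-1) * Real.exp (R^2/8) * (1+R) ^ (max α 0) :=
          mul_le_mul (mul_le_mul_of_nonneg_left hexp hu0) hpow
            (Real.rpow_nonneg (by linarith) _) (mul_nonneg hu0 (Real.exp_nonneg _))
        calc t ^ (a-1) * (1-t) ^ (b-1) * Real.exp (t^2*R^2/2) * (1+t*R) ^ α
            ≤ t ^ (a-1) * (1-t) ^ (b-1) * Real.exp (R^2/8) * (1+R) ^ (max α 0) := step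
          _ = K₁ * (t ^ (a-1) * (1-t) ^ (b-1)) := by rw [hK₁]; ring
          _ ≤ _ := le_add_of_nonneg_right (mul_nonneg hK₂0 hv0)
      · -- large t : dominate by the gamma term
        have hMa : t ^ (a-1) ≤ M := by
          rw [hM]; exact aux_rpow_bound (by linarith) ht1.le
        have hexp2 : Real.exp (t^2*R^2/2) ≤ Real.exp (R^2/2) * Real.exp (-(c * (1-t))) := by
          rw [← Real.exp_add]
          refine Real.exp_le_exp.mpr ?_
          rw [hc]
          nlinarith [mul_nonneg (sq_nonneg R) (mul_nonneg ht0.le h1t.le)]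
        have hpow2 : (1+t*R) ^ α ≤ cα * (1+R) ^ α := by
          rcases le_or_gt 0 α with hα | hα
          · calc (1+t*R) ^ α ≤ (1+R) ^ α := Real.rpow_le_rpow (by linarith) (by nlinarith) hα
              _ ≤ cα * (1+R) ^ α :=
                le_mul_of_one_le_left (Real.rpow_nonneg (by linarith) _) hc1
          · have hhalf : (1+R)/2 ≤ 1+t*R := by
              nlinarith [mul_nonneg (by linarith : (0:ℝ) ≤ t - 1/2) hR0]
            have h2 : (1+t*R) ^ α ≤ ((1+R)/2) ^ α :=
              Real.rpow_le_rpow_of_nonpos (by linarith) hhalf hα.le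
            have h3 : ((1+R)/2) ^ α = (2:ℝ) ^ (-α) * (1+R) ^ α := by
              rw [Real.div_rpow (by linarith) (by norm_num),
                Real.rpow_neg (by norm_num : (0:ℝ) ≤ 2)]
              ring
            rw [h3] at h2
            exact le_trans h2 (mul_le_mul_of_nonneg_right (le_max_right 1 _)
              (Real.rpow_nonneg (by linarith) _))
        have hM0 : (0:ℝ) ≤ M := by linarith
        calc t ^ (a-1) * (1-t) ^ (b-1) * Real.exp (t^2*R^2/2) * (1+t*R) ^ α
            = (t ^ (a-1) * ((1-t) ^ (b-1) * Real.exp (t^2*R^2/2))) * (1+t*R) ^ α := by ring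
          _ ≤ (M * ((1-t) ^ (b-1) * (Real.exp (R^2/2) * Real.exp (-(c * (1-t))))))
              * (cα * (1+R) ^ α) := by
              refine mul_le_mul ?_ hpow2 (Real.rpow_nonneg (by linarith) _) ?_
              · exact mul_le_mul hMa
                  (mul_le_mul_of_nonneg_left hexp2 (Real.rpow_nonneg h1t.le _))
                  (mul_nonneg (Real.rpow_nonneg h1t.le _) (Real.exp_nonneg _)) hM0
              · exact mul_nonneg hM0 (mul_nonneg (Real.rpow_nonneg h1t.le _)
                  (mul_nonneg (Real.exp_nonneg _) (Real.exp_nonneg _)))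
          _ = K₂ * ((1-t) ^ (b-1) * Real.exp (-(c * (1-t)))) := by rw [hK₂, hE]; ring
          _ ≤ _ := le_add_of_nonneg_left (mul_nonneg hK₁0 hu0)
  -- Step 2 : bound J
  have hrefl : J = ∫ s in Ioo (0:ℝ) 1, s ^ (b-1) * Real.exp (-(c * s)) := by
    rw [hJdef, ← aux_reflect (fun s => s ^ (b-1) * Real.exp (-(c * s)))]
  have hJ : J ≤ C₂ * (1+R) ^ (-(2*b)) := by
    rcases le_or_gt R 1 with hRle | hRgt
    · have h1 : J ≤ 1 / b := by
        rw [hrefl, ← aux_val_rpow hb]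
        refine integral_mono_of_nonneg ?_ (aux_int_left hb) ?_
        · refine (ae_restrict_iff' measurableSet_Ioo).mpr (ae_of_all _ fun s hs => ?_)
          exact mul_nonneg (Real.rpow_nonneg hs.1.le _) (Real.exp_nonneg _)
        · refine (ae_restrict_iff' measurableSet_Ioo).mpr (ae_of_all _ fun s hs => ?_)
          have : Real.exp (-(c * s)) ≤ 1 := by
            calc Real.exp (-(c * s)) ≤ Real.exp 0 := Real.exp_le_exp.mpr (by nlinarith [hs.1.le])
              _ = 1 := Real.exp_zero
          exact mul_le_of_le_one_right (Real.rpow_nonneg hs.1.le _) this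
      have h2 : (2:ℝ) ^ (-(2*b)) ≤ (1+R) ^ (-(2*b)) :=
        Real.rpow_le_rpow_of_nonpos h1R (by linarith) (by linarith)
      have h3 : (2:ℝ) ^ (2*b) * (2:ℝ) ^ (-(2*b)) = 1 := by
        rw [← Real.rpow_add (by norm_num : (0:ℝ) < 2)]
        simp
      calc J ≤ 1 / b := h1
        _ = ((2:ℝ) ^ (2*b) / b) * (2:ℝ) ^ (-(2*b)) := by
            rw [show ((2:ℝ) ^ (2*b) / b) * (2:ℝ) ^ (-(2*b))
              = ((2:ℝ) ^ (2*b) * (2:ℝ) ^ (-(2*b))) / b by ring, h3]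
        _ ≤ C₂ * (1+R) ^ (-(2*b)) :=
            mul_le_mul (le_max_left _ _) h2 (Real.rpow_nonneg (by norm_num) _) hC₂0.le
    · have hcpos : 0 < c := by rw [hc]; nlinarith
      have h1 : J ≤ (1/c) ^ b * Real.Gamma b := by
        rw [hrefl, ← Real.integral_rpow_mul_exp_neg_mul_Ioi hb hcpos]
        refine setIntegral_mono_set ?_ ?_ (HasSubset.Subset.eventuallyLE Ioo_subset_Ioi_self)
        · have h := integrableOn_rpow_mul_exp_neg_mul_rpow
            (by linarith : (-1:ℝ) < b - 1) (zero_lt_one : (0:ℝ) < 1) hcpos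
          simp only [Real.rpow_one, neg_mul] at h
          exact h
        · refine (ae_restrict_iff' measurableSet_Ioi).mpr (ae_of_all _ fun s hs => ?_)
          exact mul_nonneg (Real.rpow_nonneg (le_of_lt hs) _) (Real.exp_nonneg _)
      have h2 : (1/c) ^ b ≤ (2:ℝ) ^ (3*b) * (1+R) ^ (-(2*b)) := by
        have e1 : (1:ℝ)/c = 2/R^2 := by rw [hc]; field_simp
        have key2 : (1:ℝ)/c ≤ 8 * ((1+R)^2)⁻¹ := by
          have hRp : (0:ℝ) < R^2 := by nlinarith
          have hSp : (0:ℝ) < (1+R)^2 := by positivity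
          rw [e1, show (8:ℝ) * ((1+R)^2)⁻¹ = 8/(1+R)^2 by ring,
            div_le_div_iff₀ hRp hSp]
          nlinarith [mul_nonneg (show (0:ℝ) ≤ 3*R+1 by nlinarith) (show (0:ℝ) ≤ R-1 by nlinarith)]
        calc (1/c) ^ b ≤ (8 * ((1+R)^2)⁻¹) ^ b :=
            Real.rpow_le_rpow (by positivity) key2 hb.le
          _ = (2:ℝ) ^ (3*b) * (1+R) ^ (-(2*b)) := by
            rw [Real.mul_rpow (by norm_num) (by positivity)]
            congr 1
            · rw [show (8:ℝ) = (2:ℝ) ^ ((3:ℕ):ℝ) by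
                rw [Real.rpow_natCast]; norm_num, ← Real.rpow_mul (by norm_num : (0:ℝ) ≤ 2)]
              norm_num
            · rw [show ((1+R)^2)⁻¹ = (1+R) ^ (-((2:ℕ):ℝ)) by
                rw [Real.rpow_neg h1R.le, Real.rpow_natCast],
                ← Real.rpow_mul h1R.le]
              norm_num
      calc J ≤ (1/c) ^ b * Real.Gamma b := h1
        _ ≤ ((2:ℝ) ^ (3*b) * (1+R) ^ (-(2*b))) * Real.Gamma b :=
            mul_le_mul_of_nonneg_right h2 (Real.Gamma_pos_of_pos hb).le
        _ = (Real.Gamma b * (2:ℝ) ^ (3*b)) * (1+R) ^ (-(2*b)) := by ring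
        _ ≤ C₂ * (1+R) ^ (-(2*b)) :=
            mul_le_mul_of_nonneg_right (le_max_right _ _) (Real.rpow_nonneg h1R.le _)
  -- Step 3 : combine
  have hK₁B : K₁ * B ≤ (B * Real.exp (2*q^2/3)) * (E * P) := by
    have h1 : (1+R) ^ (max α 0) = P * (1+R) ^ q := by
      rw [hP, ← Real.rpow_add h1R]
      congr 1
      rw [hq]; ring
    have h2 : (1+R) ^ q ≤ Real.exp (q*R) := by
      rw [Real.rpow_def_of_pos h1R]
      refine Real.exp_le_exp.mpr ?_
      have := Real.log_le_sub_one_of_pos h1R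
      calc Real.log (1+R) * q ≤ R * q := by nlinarith
        _ = q * R := by ring
    have h3 : Real.exp (q*R) ≤ Real.exp (2*q^2/3) * Real.exp (3*R^2/8) := by
      rw [← Real.exp_add]
      exact Real.exp_le_exp.mpr (by nlinarith [sq_nonneg (3*R - 4*q)])
    have h4 : Real.exp (R^2/8) * (Real.exp (2*q^2/3) * Real.exp (3*R^2/8))
        = Real.exp (2*q^2/3) * E := by
      rw [hE, ← Real.exp_add, ← Real.exp_add, ← Real.exp_add]
      congr 1
      ring
    calc K₁ * B = B * (Real.exp (R^2/8) * (1+R) ^ q) * P := by rw [hK₁, h1]; ring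
      _ ≤ B * (Real.exp (R^2/8) * (Real.exp (2*q^2/3) * Real.exp (3*R^2/8))) * P := by
          refine mul_le_mul_of_nonneg_right ?_ hP0.le
          refine mul_le_mul_of_nonneg_left ?_ hB0
          exact mul_le_mul_of_nonneg_left (h2.trans h3) (Real.exp_nonneg _)
      _ = (B * Real.exp (2*q^2/3)) * (E * P) := by rw [h4]; ring
  have hK₂J : K₂ * J ≤ (M * cα * C₂) * (E * P) := by
    have hPP : (1+R) ^ α * (1+R) ^ (-(2*b)) = P := by
      rw [hP, ← Real.rpow_add h1R]
      congr 1
    have hJ0 : J ≤ C₂ * (1+R) ^ (-(2*b)) := hJ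
    calc K₂ * J ≤ K₂ * (C₂ * (1+R) ^ (-(2*b))) := mul_le_mul_of_nonneg_left hJ0 hK₂0
      _ = (M * cα * C₂) * (E * ((1+R) ^ α * (1+R) ^ (-(2*b)))) := by rw [hK₂]; ring
      _ = (M * cα * C₂) * (E * P) := by rw [hPP]
  have hEP : 0 ≤ E * P := mul_nonneg (Real.exp_nonneg _) hP0.le
  calc (∫ t in Ioo (0:ℝ) 1,
        t ^ (a - 1) * (1 - t) ^ (b - 1) * Real.exp (t ^ 2 * R ^ 2 / 2) * (1 + t * R) ^ α)
      ≤ K₁ * B + K₂ * J := key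
    _ ≤ (B * Real.exp (2*q^2/3)) * (E * P) + (M * cα * C₂) * (E * P) := add_le_add hK₁B hK₂J
    _ = (B * Real.exp (2*q^2/3) + M * cα * C₂) * (E * P) := by ring
    _ ≤ (B * Real.exp (2*q^2/3) + M * cα * C₂ + 1) * (E * P) := by nlinarith
    _ = (B * Real.exp (2*q^2/3) + M * cα * C₂ + 1) * E * P := by ring
end

section
/- Given α real, there is a constant C > 0 such that for every multi-index ν and every entire f with ‖f‖_{F^∞_α} := sup_z |f(z)| e^{−|z|²/2} (1+|z|)^{−α} < ∞, one has |∂^ν f(0)/ν!| · ‖z^ν‖_{F^∞_α} ≤ C ‖f‖_{F^∞_α}. -/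
set_option maxHeartbeats 1000000
set_option synthInstance.maxHeartbeats 100000

open MeasureTheory

/-- The partial derivative `∂_i` of a function on `ℂⁿ`. -/
noncomputable def cpderiv {n : ℕ} (i : Fin n)
    (f : EuclideanSpace ℂ (Fin n) → ℂ) : EuclideanSpace ℂ (Fin n) → ℂ :=
  fun z => fderiv ℂ f z (EuclideanSpace.single i 1)

/-- The iterated partial derivative `∂^ν` associated to a multi-index `ν`. -/
noncomputable def mderiv {n : ℕ} (ν : Fin n → ℕ)
    (f : EuclideanSpace ℂ (Fin n) → ℂ) : EuclideanSpace ℂ (Fin n) → ℂ :=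
  (List.finRange n).foldr (fun i g => (fun h => cpderiv i h)^[ν i] g) f

section Lemmas

open Metric Real

variable {n : ℕ}
local notation "E" => EuclideanSpace ℂ (Fin n)

/-- One-dimensional sharp Cauchy estimate. -/
theorem cauchy1D {g : ℂ → ℂ} (hg : Differentiable ℂ g) (c : ℂ) {r B : ℝ} (hr : 0 < r)
    (hB : ∀ w : ℂ, ‖w - c‖ = r → ‖g w‖ ≤ B) (k : ℕ) :
    ‖iteratedDeriv k g c‖ ≤ (k.factorial : ℝ) * B / r ^ k := by
  have hB0 : 0 ≤ B := le_trans (norm_nonneg _) (hB (c + r) (by simp [abs_of_pos hr]))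
  lift r to NNReal using hr.le with R hR
  have hp := hg.hasFPowerSeriesOnBall c (R := R) (by exact_mod_cast hr)
  have h1 : iteratedDeriv k g c = k.factorial • (cauchyPowerSeries g c R k fun _ => 1) := by
    rw [iteratedDeriv_eq_iteratedFDeriv, ← hp.factorial_smul 1 k]
  have h2 : ‖cauchyPowerSeries g c R k fun _ => 1‖ ≤ B / (R : ℝ) ^ k := by
    have h3 := (cauchyPowerSeries g c R k).le_opNorm (fun _ => 1)
    simp only [norm_one, Finset.prod_const_one, mul_one] at h3
    have h4 := norm_cauchyPowerSeries_le g c R k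
    have h5 : (∫ θ : ℝ in (0)..2 * π, ‖g (circleMap c R θ)‖) ≤ 2 * π * B := by
      have := intervalIntegral.norm_integral_le_of_norm_le_const
        (C := B) (a := 0) (b := 2 * π) (f := fun θ => ‖g (circleMap c R θ)‖) ?_
      · calc (∫ θ : ℝ in (0)..2 * π, ‖g (circleMap c R θ)‖)
            ≤ ‖∫ θ : ℝ in (0)..2 * π, ‖g (circleMap c R θ)‖‖ := le_abs_self _
          _ ≤ B * |2 * π - 0| := this
          _ = 2 * π * B := by rw [sub_zero, abs_of_pos Real.two_pi_pos]; ring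
      · intro θ _
        simp only [norm_norm]
        exact hB _ (by simp [circleMap_sub_center, norm_circleMap_zero, abs_of_nonneg (NNReal.coe_nonneg R)])
    calc ‖cauchyPowerSeries g c R k fun _ => 1‖
        ≤ ‖cauchyPowerSeries g c R k‖ := h3
      _ ≤ ((2 * π)⁻¹ * ∫ θ : ℝ in (0)..2 * π, ‖g (circleMap c R θ)‖) * |(R : ℝ)|⁻¹ ^ k := h4
      _ ≤ ((2 * π)⁻¹ * (2 * π * B)) * |(R : ℝ)|⁻¹ ^ k := by gcongr
      _ = B / (R : ℝ) ^ k := by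
          rw [abs_of_pos hr, inv_pow]
          rw [inv_mul_cancel_left₀ (by positivity : (2*π : ℝ) ≠ 0)]
          rw [div_eq_mul_inv]
  calc ‖iteratedDeriv k g c‖
      = (k.factorial : ℝ) * ‖cauchyPowerSeries g c R k fun _ => 1‖ := by
        rw [h1]; simp [Complex.norm_natCast]  -- abs of nsmul
    _ ≤ (k.factorial : ℝ) * (B / (R : ℝ) ^ k) := by gcongr
    _ = (k.factorial : ℝ) * B / (R : ℝ) ^ k := by ring


theorem slice_hasDerivAt {g : E → ℂ} (z v : E) (w : ℂ)
    (hg : DifferentiableAt ℂ g (z + w • v)) :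
    HasDerivAt (fun u : ℂ => g (z + u • v)) (fderiv ℂ g (z + w • v) v) w := by
  have h1 : HasDerivAt (fun u : ℂ => z + u • v) v w := by
    simpa using ((hasDerivAt_id w).smul_const v).const_add z
  exact hg.hasFDerivAt.comp_hasDerivAt w h1

theorem slice_differentiable {g : E → ℂ} (hg : Differentiable ℂ g) (z v : E) :
    Differentiable ℂ (fun u : ℂ => g (z + u • v)) :=
  fun w => (slice_hasDerivAt z v w (hg _)).differentiableAt

/-- The coefficient in the Cauchy-integral representation of the first derivative. -/
noncomputable def ccoef (θ : ℝ) : ℂ :=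
  deriv (circleMap 0 1) θ * (((1:ℂ) / (circleMap 0 1 θ - 0)) ^ 1 * (circleMap 0 1 θ - 0)⁻¹)

theorem ccoef_eq (θ : ℝ) : ccoef θ = Complex.I * (circleMap 0 1 θ)⁻¹ := by
  have h0 : circleMap 0 1 θ ≠ 0 := circleMap_ne_center one_ne_zero
  rw [ccoef, deriv_circleMap]
  field_simp
  ring

theorem ccoef_continuous : Continuous ccoef := by
  have h : Continuous fun θ : ℝ => (circleMap 0 1 θ)⁻¹ :=
    (continuous_circleMap 0 1).inv₀ fun θ => circleMap_ne_center one_ne_zero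
  simpa [funext ccoef_eq] using h.fun_const_smul Complex.I

theorem ccoef_abs (θ : ℝ) : ‖ccoef θ‖ = 1 := by
  rw [ccoef_eq]
  simp [map_mul, norm_circleMap_zero]

/-- Integral representation of `cpderiv`. -/
theorem cpderiv_rep {g : E → ℂ} (hg : Differentiable ℂ g) (i : Fin n) (z : E) :
    cpderiv i g z = (2 * ↑π * Complex.I)⁻¹ • ∫ θ in Set.Ioc (0:ℝ) (2 * π),
      ccoef θ • g (z + circleMap 0 1 θ • EuclideanSpace.single i 1) := by
  set v : E := EuclideanSpace.single i 1 with hv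
  have hφ : Differentiable ℂ fun u : ℂ => g (z + u • v) := slice_differentiable hg z v
  have hp := hφ.hasFPowerSeriesOnBall 0 (R := 1) one_pos
  have h1 : cpderiv i g z = deriv (fun u : ℂ => g (z + u • v)) 0 := by
    have := (slice_hasDerivAt z v 0 (hg _)).deriv
    simpa [cpderiv] using this.symm
  have h2 := hp.factorial_smul (1 : ℂ) 1
  rw [← iteratedDeriv_eq_iteratedFDeriv] at h2
  simp only [Nat.factorial_one, one_smul, iteratedDeriv_one] at h2
  rw [h1, ← h2, cauchyPowerSeries_apply]
  rw [circleIntegral, intervalIntegral.integral_of_le Real.two_pi_pos.le]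
  congr 1
  simp only [NNReal.coe_one]
  refine setIntegral_congr_fun measurableSet_Ioc fun θ _ => ?_
  rw [ccoef, smul_smul, smul_smul, mul_assoc]


theorem fderiv_norm_le {g : E → ℂ} (hg : Differentiable ℂ g) (x : E) {K : ℝ}
    (h : ∀ y : E, ‖y - x‖ ≤ 1 → ‖g y‖ ≤ K) : ‖fderiv ℂ g x‖ ≤ K := by
  have hK0 : 0 ≤ K := le_trans (norm_nonneg _) (h x (by simp))
  refine ContinuousLinearMap.opNorm_le_bound _ hK0 fun v => ?_
  rcases eq_or_ne v 0 with rfl | hv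
  · simp
  · have hv0 : 0 < ‖v‖ := norm_pos_iff.2 hv
    have hd : fderiv ℂ g x v = iteratedDeriv 1 (fun u : ℂ => g (x + u • v)) 0 := by
      rw [iteratedDeriv_one]
      have := (slice_hasDerivAt x v 0 (hg _)).deriv
      simpa using this.symm
    have hc := cauchy1D (slice_differentiable hg x v) 0 (r := ‖v‖⁻¹) (by positivity)
      (fun w hw => h (x + w • v) (by
        have : ‖w‖ = ‖v‖⁻¹ := by simpa using hw
        have : ‖w • v‖ = 1 := by
          rw [norm_smul, this]
          field_simp
        simp [this])) 1
    rw [hd]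
    calc ‖iteratedDeriv 1 (fun u : ℂ => g (x + u • v)) 0‖
        ≤ ((1:ℕ).factorial : ℝ) * K / (‖v‖⁻¹) ^ 1 := hc
      _ = K * ‖v‖ := by rw [Nat.factorial_one, Nat.cast_one, one_mul]; field_simp

theorem cpderiv_differentiable (i : Fin n) {g : E → ℂ} (hg : Differentiable ℂ g) :
    Differentiable ℂ (cpderiv i g) := by
  intro z₀
  borelize (EuclideanSpace ℂ (Fin n))
  set v : E := EuclideanSpace.single i 1 with hv
  have hv1 : ‖v‖ = 1 := by simp [hv, EuclideanSpace.norm_single]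
  set μ : Measure ℝ := volume.restrict (Set.Ioc (0:ℝ) (2 * π)) with hμ
  obtain ⟨K, hK⟩ := (isCompact_closedBall z₀ 3).exists_bound_of_continuousOn
    hg.continuous.continuousOn
  -- bound on fderiv over closedBall z₀ 2
  have hfd : ∀ x : E, ‖x - z₀‖ ≤ 2 → ‖fderiv ℂ g x‖ ≤ K := by
    intro x hx
    refine fderiv_norm_le hg x fun y hy => ?_
    refine hK y ?_
    rw [mem_closedBall, dist_eq_norm]
    calc ‖y - z₀‖ = ‖(y - x) + (x - z₀)‖ := by rw [sub_add_sub_cancel]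
      _ ≤ ‖y - x‖ + ‖x - z₀‖ := norm_add_le _ _
      _ ≤ 1 + 2 := add_le_add hy hx
      _ = 3 := by norm_num
  have hpath : ∀ (x : E) θ, x ∈ ball z₀ 1 → ‖(x + circleMap 0 1 θ • v) - z₀‖ ≤ 2 := by
    intro x θ hx
    calc ‖(x + circleMap 0 1 θ • v) - z₀‖ = ‖(x - z₀) + circleMap 0 1 θ • v‖ := by
          rw [add_sub_right_comm]
      _ ≤ ‖x - z₀‖ + ‖circleMap 0 1 θ • v‖ := norm_add_le _ _
      _ ≤ 1 + 1 := by
          refine add_le_add (le_of_lt (by simpa [dist_eq_norm] using hx)) ?_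
          rw [norm_smul, hv1, mul_one, norm_circleMap_zero]
          norm_num
      _ = 2 := by norm_num
  have hmeaspath : Measurable fun θ : ℝ => z₀ + circleMap 0 1 θ • v :=
    (measurable_const.add ((continuous_circleMap 0 1).measurable.smul_const v))
  have key := hasFDerivAt_integral_of_dominated_of_fderiv_le (𝕜 := ℂ) (μ := μ)
    (F := fun z θ => ccoef θ • g (z + circleMap 0 1 θ • v))
    (F' := fun z θ => ccoef θ • fderiv ℂ g (z + circleMap 0 1 θ • v))
    (x₀ := z₀) (bound := fun _ => K) (s := ball z₀ 1) (ball_mem_nhds z₀ one_pos)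
    (Filter.Eventually.of_forall fun x =>
      ((ccoef_continuous.smul (hg.continuous.comp
        (continuous_const.add ((continuous_circleMap 0 1).smul continuous_const)))).aestronglyMeasurable))
    ((ccoef_continuous.smul (hg.continuous.comp
      (continuous_const.add ((continuous_circleMap 0 1).smul continuous_const)))).integrableOn_Ioc)
    ((ccoef_continuous.stronglyMeasurable.smul
      ((measurable_fderiv ℂ g).comp hmeaspath).stronglyMeasurable).aestronglyMeasurable)
    (ae_of_all _ fun θ => fun x hx => by
      refine le_trans (ContinuousLinearMap.opNorm_smul_le (ccoef θ) _) ?_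
      rw [ccoef_abs, one_mul]
      exact hfd _ (hpath x θ hx))
    (integrableOn_const (C := K) measure_Ioc_lt_top.ne)
    (ae_of_all _ fun θ => fun x hx => by
      have h1 : HasFDerivAt (fun z : E => g (z + circleMap 0 1 θ • v))
          (fderiv ℂ g (x + circleMap 0 1 θ • v)) x := by
        have h2 := (hg (x + circleMap 0 1 θ • v)).hasFDerivAt
        have h3 := h2.comp x ((hasFDerivAt_id x).add_const (circleMap 0 1 θ • v))
        exact h3
      exact h1.fun_const_smul (ccoef θ))
  have : cpderiv i g = fun z => (2 * ↑π * Complex.I)⁻¹ •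
      ∫ θ in Set.Ioc (0:ℝ) (2 * π), ccoef θ • g (z + circleMap 0 1 θ • v) :=
    funext fun z => cpderiv_rep hg i z
  rw [this]
  exact (key.differentiableAt.fun_const_smul _)

theorem iterate_differentiable (i : Fin n) (k : ℕ) {g : E → ℂ} (hg : Differentiable ℂ g) :
    Differentiable ℂ ((fun h => cpderiv i h)^[k] g) := by
  induction k generalizing g with
  | zero => exact hg
  | succ k ih =>
      rw [Function.iterate_succ_apply]
      exact ih (cpderiv_differentiable i hg)

theorem foldr_differentiable (ν : Fin n → ℕ) (L : List (Fin n)) {f : E → ℂ}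
    (hf : Differentiable ℂ f) :
    Differentiable ℂ (L.foldr (fun i g => (fun h => cpderiv i h)^[ν i] g) f) := by
  induction L with
  | nil => exact hf
  | cons i t ih => exact iterate_differentiable i (ν i) ih

theorem slice_iterate (i : Fin n) (k : ℕ) {g : E → ℂ} (hg : Differentiable ℂ g) (z : E) (w : ℂ) :
    (fun h => cpderiv i h)^[k] g (z + w • EuclideanSpace.single i 1)
      = deriv^[k] (fun u : ℂ => g (z + u • EuclideanSpace.single i 1)) w := by
  induction k generalizing g with
  | zero => rfl
  | succ k ih =>
      rw [Function.iterate_succ_apply, Function.iterate_succ_apply]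
      rw [ih (cpderiv_differentiable i hg)]
      have hfun : (fun u : ℂ => cpderiv i g (z + u • EuclideanSpace.single i 1))
          = deriv (fun u : ℂ => g (z + u • EuclideanSpace.single i 1)) :=
        funext fun u => ((slice_hasDerivAt z _ u (hg _)).deriv).symm
      rw [hfun]

theorem multi_cauchy (ν : Fin n → ℕ) (r : Fin n → ℝ)
    (hr0 : ∀ j, ν j = 0 → r j = 0) (hr1 : ∀ j, ν j ≠ 0 → 0 < r j) :
    ∀ L : List (Fin n), L.Nodup → ∀ f : E → ℂ, Differentiable ℂ f → ∀ z : E, ∀ B : ℝ, 0 ≤ B →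
    (∀ w : E, (∀ j, (j ∈ L → ‖w j - z j‖ = r j) ∧ (j ∉ L → w j = z j)) →
      ‖f w‖ ≤ B) →
    ‖(L.foldr (fun i g => (fun h => cpderiv i h)^[ν i] g) f) z‖
      ≤ (L.map fun j => ((ν j).factorial : ℝ) / r j ^ ν j).prod * B := by
  intro L
  induction L with
  | nil =>
      intro _ f hf z B hB0 hB
      simp only [List.foldr_nil, List.map_nil, List.prod_nil, one_mul]
      exact hB z fun j => ⟨fun h => absurd h List.not_mem_nil, fun _ => rfl⟩
  | cons i t ih =>
      intro hnd f hf z B hB0 hB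
      have hit : i ∉ t := (List.nodup_cons.1 hnd).1
      have hndt : t.Nodup := (List.nodup_cons.1 hnd).2
      set g := t.foldr (fun i g => (fun h => cpderiv i h)^[ν i] g) f with hgdef
      have hgd : Differentiable ℂ g := foldr_differentiable ν t hf
      have hprodt : 0 ≤ (t.map fun j => ((ν j).factorial : ℝ) / r j ^ ν j).prod := by
        refine List.prod_nonneg fun x hx => ?_
        obtain ⟨j, _, rfl⟩ := List.mem_map.1 hx
        rcases eq_or_ne (ν j) 0 with h | h
        · simp [h]
        · have := hr1 j h
          positivity
      rcases eq_or_ne (ν i) 0 with h0 | h0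
      · -- identity step
        have heq : ((i :: t).foldr (fun i g => (fun h => cpderiv i h)^[ν i] g) f) z = g z := by
          rw [List.foldr_cons, h0, Function.iterate_zero, id_eq]
        rw [heq, List.map_cons, List.prod_cons, h0]
        simp only [Nat.factorial_zero, Nat.cast_one, pow_zero, div_one, one_mul]
        refine ih hndt f hf z B hB0 fun w hw => hB w fun j => ⟨?_, ?_⟩
        · intro hj
          rcases List.mem_cons.1 hj with rfl | hjt
          · rw [(hw j).2 hit, hr0 j h0]
            simp
          · exact (hw j).1 hjt
        · intro hj
          exact (hw j).2 fun h => hj (List.mem_cons_of_mem _ h)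
      · -- Cauchy step
        have hri : 0 < r i := hr1 i h0
        set φ : ℂ → ℂ := fun u => g (z + u • EuclideanSpace.single i 1) with hφdef
        have hφ : Differentiable ℂ φ := slice_differentiable hgd z _
        have heq : ((i :: t).foldr (fun i g => (fun h => cpderiv i h)^[ν i] g) f) z
            = iteratedDeriv (ν i) φ 0 := by
          rw [List.foldr_cons, iteratedDeriv_eq_iterate, ← hgdef]
          have := slice_iterate i (ν i) hgd z 0
          simpa using this
        have hBt : ∀ u : ℂ, ‖u - 0‖ = r i →
            ‖φ u‖ ≤ (t.map fun j => ((ν j).factorial : ℝ) / r j ^ ν j).prod * B := by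
          intro u hu
          rw [sub_zero] at hu
          refine ih hndt f hf (z + u • EuclideanSpace.single i 1) B hB0 fun w hw => ?_
          refine hB w fun j => ⟨?_, ?_⟩
          · intro hj
            rcases List.mem_cons.1 hj with rfl | hjt
            · rw [(hw j).2 hit]
              simp only [PiLp.add_apply, PiLp.smul_apply, EuclideanSpace.single_apply,
                if_pos rfl, smul_eq_mul, mul_one]
              simpa using hu
            · have hji : j ≠ i := fun h => hit (h ▸ hjt)
              have := (hw j).1 hjt
              rwa [PiLp.add_apply, PiLp.smul_apply, EuclideanSpace.single_apply,
                if_neg hji, smul_eq_mul, mul_zero, add_zero] at this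
          · intro hj
            have hjt : j ∉ t := fun h => hj (List.mem_cons_of_mem _ h)
            have hji : j ≠ i := fun h => hj (h ▸ List.mem_cons_self)
            rw [(hw j).2 hjt, PiLp.add_apply, PiLp.smul_apply, EuclideanSpace.single_apply,
              if_neg hji, smul_eq_mul, mul_zero, add_zero]
        have hc := cauchy1D hφ 0 hri hBt (ν i)
        rw [heq]
        simp only [iteratedDeriv_eq_iterate] at hc ⊢
        calc ‖deriv^[ν i] φ 0‖
            ≤ ((ν i).factorial : ℝ) *
              ((t.map fun j => ((ν j).factorial : ℝ) / r j ^ ν j).prod * B) / r i ^ ν i := hc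
          _ = (((i :: t).map fun j => ((ν j).factorial : ℝ) / r j ^ ν j).prod) * B := by
              rw [List.map_cons, List.prod_cons]
              field_simp

theorem rpow_split (α a b : ℝ) (h0 : 0 ≤ a) (hab : a ≤ b) :
    (1 + b) ^ (-α) ≤ (1 + a) ^ (-α) * (1 + (b - a)) ^ |α| := by
  rcases le_total α 0 with hα | hα
  · rw [abs_of_nonpos hα]
    have h1 : (1 + b) ≤ (1 + a) * (1 + (b - a)) := by nlinarith
    calc (1 + b) ^ (-α) ≤ ((1 + a) * (1 + (b - a))) ^ (-α) :=
          Real.rpow_le_rpow (by linarith) h1 (by linarith)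
      _ = (1 + a) ^ (-α) * (1 + (b - a)) ^ (-α) := Real.mul_rpow (by linarith) (by linarith)
  · have h2 : (1 + b) ^ (-α) ≤ (1 + a) ^ (-α) :=
      Real.rpow_le_rpow_of_nonpos (by linarith) (by linarith) (by linarith)
    have h3 : (1 : ℝ) ≤ (1 + (b - a)) ^ |α| := Real.one_le_rpow (by linarith) (abs_nonneg α)
    nlinarith [Real.rpow_nonneg (show (0:ℝ) ≤ 1 + a by linarith) (-α),
      Real.rpow_nonneg (show (0:ℝ) ≤ 1 + b by linarith) (-α)]

theorem weight_mono (α a b : ℝ) (h0 : 0 ≤ a) (hab : a ≤ b) :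
    Real.exp (-(b ^ 2 / 2)) * (1 + b) ^ (-α)
      ≤ Real.exp (α ^ 2 / 2) * (Real.exp (-(a ^ 2 / 2)) * (1 + a) ^ (-α)) := by
  set s : ℝ := Real.sqrt (b ^ 2 - a ^ 2) with hs
  have hs0 : 0 ≤ s := Real.sqrt_nonneg _
  have hs2 : s ^ 2 = b ^ 2 - a ^ 2 := Real.sq_sqrt (by nlinarith)
  have hba : b - a ≤ s := by nlinarith [sq_nonneg (s - (b - a)), sq_nonneg (s + (b - a))]
  have h1 : (1 + b) ^ (-α) ≤ (1 + a) ^ (-α) * (1 + (b - a)) ^ |α| := rpow_split α a b h0 hab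
  have h2 : (1 + (b - a)) ^ |α| ≤ Real.exp (s * |α|) := by
    calc (1 + (b - a)) ^ |α| ≤ (Real.exp s) ^ |α| := by
          refine Real.rpow_le_rpow (by linarith) ?_ (abs_nonneg α)
          have := Real.add_one_le_exp s
          linarith
      _ = Real.exp (s * |α|) := by
          rw [Real.rpow_def_of_pos (Real.exp_pos s), Real.log_exp]
  have h3 : Real.exp (-(b ^ 2 / 2)) = Real.exp (-(a ^ 2 / 2)) * Real.exp (-(s ^ 2 / 2)) := by
    rw [← Real.exp_add]
    congr 1
    nlinarith
  have h4 : Real.exp (-(s ^ 2 / 2)) * Real.exp (s * |α|) ≤ Real.exp (α ^ 2 / 2) := by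
    rw [← Real.exp_add]
    refine Real.exp_le_exp.2 ?_
    nlinarith [sq_nonneg (s - |α|), sq_abs α]
  have hp1 : (0:ℝ) ≤ (1 + a) ^ (-α) := Real.rpow_nonneg (by linarith) _
  calc Real.exp (-(b ^ 2 / 2)) * (1 + b) ^ (-α)
      ≤ Real.exp (-(b ^ 2 / 2)) * ((1 + a) ^ (-α) * (1 + (b - a)) ^ |α|) := by
        refine mul_le_mul_of_nonneg_left h1 (Real.exp_nonneg _)
    _ = (Real.exp (-(a ^ 2 / 2)) * (1 + a) ^ (-α)) * (Real.exp (-(s ^ 2 / 2)) * (1 + (b - a)) ^ |α|) := by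
        rw [h3]; ring
    _ ≤ (Real.exp (-(a ^ 2 / 2)) * (1 + a) ^ (-α)) * (Real.exp (-(s ^ 2 / 2)) * Real.exp (s * |α|)) := by
        refine mul_le_mul_of_nonneg_left (mul_le_mul_of_nonneg_left h2 (Real.exp_nonneg _)) ?_
        positivity
    _ ≤ (Real.exp (-(a ^ 2 / 2)) * (1 + a) ^ (-α)) * Real.exp (α ^ 2 / 2) := by
        refine mul_le_mul_of_nonneg_left h4 ?_
        positivity
    _ = Real.exp (α ^ 2 / 2) * (Real.exp (-(a ^ 2 / 2)) * (1 + a) ^ (-α)) := by ring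

theorem pointwise_reduced (α : ℝ) (ν : Fin n → ℕ) {f : E → ℂ} (hf : Differentiable ℂ f) {M : ℝ}
    (hM : ∀ z : E, ‖f z‖ * Real.exp (-(‖z‖ ^ 2 / 2)) * (1 + ‖z‖) ^ (-α) ≤ M)
    (hM0 : 0 ≤ M)
    (z₀ : E) (hz₀ : ∀ j, ν j = 0 → z₀ j = 0) :
    (‖((List.finRange n).foldr (fun i g => (fun h => cpderiv i h)^[ν i] g) f) 0‖
        / ∏ j, ((ν j).factorial : ℝ)) *
      ((∏ j, ‖z₀ j‖ ^ ν j) * Real.exp (-(‖z₀‖ ^ 2 / 2)) * (1 + ‖z₀‖) ^ (-α)) ≤ M := by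
  by_cases hex : ∃ j, ν j ≠ 0 ∧ z₀ j = 0
  · obtain ⟨j, hj1, hj2⟩ := hex
    have hz : ∏ j, ‖z₀ j‖ ^ ν j = 0 :=
      Finset.prod_eq_zero (Finset.mem_univ j) (by rw [hj2]; simp [zero_pow hj1])
    rw [hz]
    simpa using hM0
  · push_neg at hex
    have hu : (0:ℝ) < Real.exp (-(‖z₀‖ ^ 2 / 2)) := Real.exp_pos _
    have hv : (0:ℝ) < (1 + ‖z₀‖) ^ (-α) := Real.rpow_pos_of_pos (by positivity) _
    set r : Fin n → ℝ := fun j => ‖z₀ j‖ with hrdef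
    have hr0 : ∀ j, ν j = 0 → r j = 0 := fun j h => by simp [hrdef, hz₀ j h]
    have hr1 : ∀ j, ν j ≠ 0 → 0 < r j := fun j h => norm_pos_iff.2 (hex j h)
    set B : ℝ := M * (Real.exp (-(‖z₀‖ ^ 2 / 2)))⁻¹ * ((1 + ‖z₀‖) ^ (-α))⁻¹ with hBdef
    have hB0 : 0 ≤ B := by positivity
    have hB : ∀ w : E, (∀ j, (j ∈ List.finRange n → ‖w j - (0:E) j‖ = r j) ∧
        (j ∉ List.finRange n → w j = (0:E) j)) → ‖f w‖ ≤ B := by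
      intro w hw
      have hwj : ∀ j, ‖w j‖ = r j := fun j => by
        have := (hw j).1 (List.mem_finRange j)
        simpa using this
      have hnorm : ‖w‖ = ‖z₀‖ := by
        rw [EuclideanSpace.norm_eq, EuclideanSpace.norm_eq]
        congr 1
        refine Finset.sum_congr rfl fun j _ => ?_
        rw [hwj j]
      have h := hM w
      rw [hnorm] at h
      calc ‖f w‖
          = (‖f w‖ * Real.exp (-(‖z₀‖ ^ 2 / 2)) * (1 + ‖z₀‖) ^ (-α))
            * (Real.exp (-(‖z₀‖ ^ 2 / 2)))⁻¹ * ((1 + ‖z₀‖) ^ (-α))⁻¹ := by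
            field_simp
        _ ≤ B := by rw [hBdef]; gcongr
    have hmc := multi_cauchy ν r hr0 hr1 (List.finRange n) (List.nodup_finRange n) f hf 0 B hB0 hB
    rw [show ((List.finRange n).map fun j => ((ν j).factorial : ℝ) / r j ^ ν j).prod
        = ∏ j, ((ν j).factorial : ℝ) / r j ^ ν j from (Fin.prod_univ_def _).symm,
      Finset.prod_div_distrib] at hmc
    have hF : (0:ℝ) < ∏ j, ((ν j).factorial : ℝ) :=
      Finset.prod_pos fun j _ => by exact_mod_cast (ν j).factorial_pos
    have hR : (0:ℝ) < ∏ j, r j ^ ν j := by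
      refine Finset.prod_pos fun j _ => ?_
      rcases eq_or_ne (ν j) 0 with h | h
      · simp [h]
      · exact pow_pos (hr1 j h) _
    have hprodeq : ∏ j, ‖z₀ j‖ ^ ν j = ∏ j, r j ^ ν j := rfl
    rw [hprodeq, div_mul_eq_mul_div, div_le_iff₀ hF]
    calc ‖((List.finRange n).foldr (fun i g => (fun h => cpderiv i h)^[ν i] g) f) 0‖
          * ((∏ j, r j ^ ν j) * Real.exp (-(‖z₀‖ ^ 2 / 2)) * (1 + ‖z₀‖) ^ (-α))
        ≤ ((∏ j, ((ν j).factorial : ℝ)) / (∏ j, r j ^ ν j) * B)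
          * ((∏ j, r j ^ ν j) * Real.exp (-(‖z₀‖ ^ 2 / 2)) * (1 + ‖z₀‖) ^ (-α)) := by
          refine mul_le_mul_of_nonneg_right hmc (by positivity)
      _ = M * ∏ j, ((ν j).factorial : ℝ) := by
          rw [hBdef]
          field_simp

end Lemmas

theorem statement_16 (n : ℕ) (α : ℝ) :
    ∃ C : ℝ, 0 < C ∧ ∀ (ν : Fin n → ℕ) (f : EuclideanSpace ℂ (Fin n) → ℂ),
      Differentiable ℂ f → ∀ M : ℝ,
      (∀ z : EuclideanSpace ℂ (Fin n),
        ‖f z‖ * Real.exp (-(‖z‖ ^ 2 / 2)) * (1 + ‖z‖) ^ (-α) ≤ M) →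
      (‖mderiv ν f 0‖ / ∏ j, (Nat.factorial (ν j) : ℝ)) *
          (⨆ z : EuclideanSpace ℂ (Fin n),
            (∏ j, ‖z j‖ ^ (ν j)) * Real.exp (-(‖z‖ ^ 2 / 2)) *
              (1 + ‖z‖) ^ (-α))
        ≤ C * M := by
  refine ⟨Real.exp (α ^ 2 / 2), Real.exp_pos _, ?_⟩
  intro ν f hf M hM
  have hM0 : 0 ≤ M := by
    have h := hM 0
    rw [norm_zero] at h
    norm_num [Real.one_rpow] at h
    exact le_trans (norm_nonneg _) h
  set c : ℝ := ‖mderiv ν f 0‖ / ∏ j, (Nat.factorial (ν j) : ℝ) with hc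
  have hc0 : 0 ≤ c :=
    div_nonneg (norm_nonneg _) (Finset.prod_nonneg fun j _ => Nat.cast_nonneg _)
  have key : ∀ z₀ : EuclideanSpace ℂ (Fin n),
      c * ((∏ j, ‖z₀ j‖ ^ ν j) * Real.exp (-(‖z₀‖ ^ 2 / 2)) * (1 + ‖z₀‖) ^ (-α))
        ≤ Real.exp (α ^ 2 / 2) * M := by
    intro z₀
    set z₁ : EuclideanSpace ℂ (Fin n) := WithLp.toLp 2 (fun j => if ν j = 0 then 0 else z₀ j) with hz₁
    have hz₁red : ∀ j, ν j = 0 → z₁ j = 0 := fun j h => by simp [hz₁, h]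
    have hprod : ∏ j, ‖z₀ j‖ ^ ν j = ∏ j, ‖z₁ j‖ ^ ν j := by
      refine Finset.prod_congr rfl fun j _ => ?_
      rcases eq_or_ne (ν j) 0 with h | h
      · simp [h]
      · simp [hz₁, h]
    have hle : ‖z₁‖ ≤ ‖z₀‖ := by
      rw [EuclideanSpace.norm_eq, EuclideanSpace.norm_eq]
      refine Real.sqrt_le_sqrt (Finset.sum_le_sum fun j _ => ?_)
      rcases eq_or_ne (ν j) 0 with h | h
      · have hzj : z₁ j = 0 := hz₁red j h
        rw [hzj, norm_zero]
        simpa using sq_nonneg ‖z₀ j‖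
      · simp [hz₁, h]
    have hw := weight_mono α ‖z₁‖ ‖z₀‖ (norm_nonneg _) hle
    have hred := pointwise_reduced α ν hf hM hM0 z₁ hz₁red
    rw [show ((List.finRange n).foldr (fun i g => (fun h => cpderiv i h)^[ν i] g) f)
        = mderiv ν f from rfl, ← hc] at hred
    have hP : (0:ℝ) ≤ ∏ j, ‖z₁ j‖ ^ ν j :=
      Finset.prod_nonneg fun j _ => pow_nonneg (norm_nonneg _) _
    calc c * ((∏ j, ‖z₀ j‖ ^ ν j) * Real.exp (-(‖z₀‖ ^ 2 / 2)) * (1 + ‖z₀‖) ^ (-α))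
        ≤ c * ((∏ j, ‖z₁ j‖ ^ ν j) *
            (Real.exp (α ^ 2 / 2) * (Real.exp (-(‖z₁‖ ^ 2 / 2)) * (1 + ‖z₁‖) ^ (-α)))) := by
          rw [hprod, mul_assoc]
          exact mul_le_mul_of_nonneg_left (mul_le_mul_of_nonneg_left hw hP) hc0
      _ = Real.exp (α ^ 2 / 2) *
            (c * ((∏ j, ‖z₁ j‖ ^ ν j) * Real.exp (-(‖z₁‖ ^ 2 / 2)) *
              (1 + ‖z₁‖) ^ (-α))) := by ring
      _ ≤ Real.exp (α ^ 2 / 2) * M :=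
          mul_le_mul_of_nonneg_left hred (Real.exp_nonneg _)
  rcases eq_or_lt_of_le hc0 with h0 | h0
  · rw [← h0, zero_mul]
    exact mul_nonneg (Real.exp_nonneg _) hM0
  · have hS : (⨆ z : EuclideanSpace ℂ (Fin n),
        (∏ j, ‖z j‖ ^ (ν j)) * Real.exp (-(‖z‖ ^ 2 / 2)) * (1 + ‖z‖) ^ (-α))
          ≤ Real.exp (α ^ 2 / 2) * M / c := by
      refine ciSup_le fun z => ?_
      rw [le_div_iff₀ h0, mul_comm]
      exact key z
    calc c * (⨆ z : EuclideanSpace ℂ (Fin n),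
          (∏ j, ‖z j‖ ^ (ν j)) * Real.exp (-(‖z‖ ^ 2 / 2)) * (1 + ‖z‖) ^ (-α))
        ≤ c * (Real.exp (α ^ 2 / 2) * M / c) := mul_le_mul_of_nonneg_left hS hc0
      _ = Real.exp (α ^ 2 / 2) * M := by
          rw [mul_comm, div_mul_cancel₀ _ (ne_of_gt h0)]
end

section
/- Let 0 < p < ∞, r > 0, α real, and suppose μ is a positive Borel measure on ℂⁿ that is a Carleson measure for F^p_α, i.e. there is C > 0 with ∫ |f(z)|^p e^{−p|z|²/2} dμ(z) ≤ C ‖f‖_{F^p_α}^p for all f ∈ F^p_α. Then there is a constant C' > 0 such that μ[B(z,r)] ≤ C' (1+|z|)^{−α} for all z ∈ ℂⁿ. -/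
open MeasureTheory

open RealInnerProductSpace in
private lemma fock_keyid (n : ℕ) (p : ℝ) (w z : EuclideanSpace ℂ (Fin n)) :
    ‖Complex.exp ((innerSL ℂ w) z - ((‖w‖^2/2 : ℝ) : ℂ))‖ ^ p
      * Real.exp (-(p * ‖z‖ ^ 2 / 2)) = Real.exp (-(p * ‖z - w‖^2 / 2)) := by
  rw [Complex.norm_exp]
  have hre : ((innerSL ℂ w) z - ((‖w‖^2/2 : ℝ) : ℂ)).re = ⟪w, z⟫ - ‖w‖^2/2 := by
    simp [innerSL_apply_apply, PiLp.inner_apply, RCLike.inner_apply, ← Complex.ofReal_pow,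
      Complex.sub_re, Complex.ofReal_re, Complex.re_sum, mul_comm]
  rw [hre, ← Real.exp_mul, ← Real.exp_add]
  congr 1
  have hns : ‖z - w‖ ^ 2 = ‖z‖ ^ 2 - 2 * ⟪z, w⟫ + ‖w‖ ^ 2 := norm_sub_sq_real z w
  have hsym : ⟪w, z⟫ = ⟪z, w⟫ := real_inner_comm z w
  rw [hsym, hns]; ring

private lemma fock_step1 {a b d α : ℝ} (ha : 0 ≤ a) (hb : 0 ≤ b) (hd : 0 ≤ d)
    (hab : a ≤ b + d) (hba : b ≤ a + d) :
    (1+a) ^ (-α) ≤ (1+b) ^ (-α) * (1+d) ^ |α| := by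
  have hx : (0:ℝ) < 1 + a := by linarith
  have hy : (0:ℝ) < 1 + b := by linarith
  have hz : (0:ℝ) < 1 + d := by linarith
  rcases le_or_gt 0 α with hα | hα
  · rw [abs_of_nonneg hα]
    have h1 : (1+b) ^ α ≤ (1+a) ^ α * (1+d) ^ α := by
      rw [← Real.mul_rpow hx.le hz.le]
      exact Real.rpow_le_rpow hy.le (by nlinarith) hα
    have e1 : (1+a) ^ (-α) * (1+a) ^ α = 1 := by
      rw [← Real.rpow_add hx]; simp
    have e2 : (1+b) ^ (-α) * (1+b) ^ α = 1 := by
      rw [← Real.rpow_add hy]; simp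
    calc (1+a) ^ (-α) = ((1+b) ^ (-α) * (1+b) ^ α) * (1+a) ^ (-α) := by rw [e2, one_mul]
      _ ≤ (1+b) ^ (-α) * ((1+a) ^ α * (1+d) ^ α) * (1+a) ^ (-α) := by
          have h2 := Real.rpow_nonneg hy.le (-α)
          have h3 := Real.rpow_nonneg hx.le (-α)
          gcongr
      _ = ((1+a) ^ (-α) * (1+a) ^ α) * ((1+b) ^ (-α) * (1+d) ^ α) := by ring
      _ = (1+b) ^ (-α) * (1+d) ^ α := by rw [e1, one_mul]
  · rw [abs_of_neg hα, ← Real.mul_rpow hy.le hz.le]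
    exact Real.rpow_le_rpow hx.le (by nlinarith) (by linarith)

private lemma fock_step2 {p d α : ℝ} (hp : 0 < p) (hd : 0 ≤ d) :
    (1+d) ^ |α| * Real.exp (-(p * d^2 / 2)) ≤ Real.exp (α^2/p) * Real.exp (-(p/4 * d^2)) := by
  have h1 : (1+d) ^ |α| ≤ Real.exp (d * |α|) := by
    calc (1+d) ^ |α| ≤ (Real.exp d) ^ |α| :=
          Real.rpow_le_rpow (by linarith) (by linarith [Real.add_one_le_exp d]) (abs_nonneg α)
      _ = Real.exp (d * |α|) := (Real.exp_mul d |α|).symm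
  calc (1+d) ^ |α| * Real.exp (-(p * d^2 / 2))
      ≤ Real.exp (d * |α|) * Real.exp (-(p * d^2 / 2)) := by gcongr
    _ = Real.exp (d * |α| - p * d^2/2) := by rw [← Real.exp_add]; ring_nf
    _ ≤ Real.exp (α^2/p + -(p/4 * d^2)) := by
        apply Real.exp_le_exp.mpr
        have hq : α^2 = (α^2/p) * p := (div_mul_cancel₀ _ hp.ne').symm
        nlinarith [sq_nonneg (p*d/2 - |α|), sq_abs α, hp, hq]
    _ = Real.exp (α^2/p) * Real.exp (-(p/4 * d^2)) := Real.exp_add _ _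

private lemma fock_integrable (n : ℕ) {b : ℝ} (hb : 0 < b) :
    Integrable (fun v : EuclideanSpace ℂ (Fin n) => Real.exp (-b * ‖v‖^2)) := by
  have h := GaussianFourier.integrable_cexp_neg_mul_sq_norm_add (V := EuclideanSpace ℂ (Fin n))
    (b := (b : ℂ)) (by simpa using hb) 0 0
  simp only [zero_mul, add_zero] at h
  have h2 := h.norm
  simp only [Complex.norm_exp, ← Complex.ofReal_pow, ← Complex.ofReal_mul,
    ← Complex.ofReal_neg, Complex.ofReal_re] at h2
  exact h2

set_option maxHeartbeats 1000000 in
theorem statement_18 (n : ℕ) (p r α : ℝ) (hp : 0 < p) (hr : 0 < r)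
    (μ : Measure (EuclideanSpace ℂ (Fin n))) (C : ℝ) (hC : 0 < C)
    (hCarleson : ∀ f : EuclideanSpace ℂ (Fin n) → ℂ, Differentiable ℂ f →
      (∫⁻ z, ENNReal.ofReal (‖f z‖ ^ p * Real.exp (-(p * ‖z‖ ^ 2 / 2))) ∂μ)
        ≤ ENNReal.ofReal C *
          ∫⁻ z, ENNReal.ofReal (‖f z‖ ^ p * Real.exp (-(p * ‖z‖ ^ 2 / 2)) *
            (1 + ‖z‖) ^ (-α))) :
    ∃ C' : ℝ, 0 < C' ∧ ∀ z : EuclideanSpace ℂ (Fin n),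
      μ (Metric.ball z r) ≤ ENNReal.ofReal (C' * (1 + ‖z‖) ^ (-α)) := by
  have hp4 : (0:ℝ) < p/4 := by linarith
  have hint : Integrable (fun v : EuclideanSpace ℂ (Fin n) => Real.exp (-(p/4) * ‖v‖^2)) :=
    fock_integrable n hp4
  set K : ℝ := ∫ v : EuclideanSpace ℂ (Fin n), Real.exp (-(p/4) * ‖v‖^2) with hKdef
  have hK0 : 0 ≤ K := integral_nonneg fun v => (Real.exp_pos _).le
  refine ⟨C * Real.exp (α^2/p) * (K+1) * Real.exp (p*r^2/2), by positivity, fun w => ?_⟩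
  set f : EuclideanSpace ℂ (Fin n) → ℂ :=
    fun z => Complex.exp ((innerSL ℂ w) z - ((‖w‖^2/2 : ℝ) : ℂ)) with hfdef
  have hdiff : Differentiable ℂ f := (((innerSL ℂ w).differentiable).sub_const _).cexp
  have hcar := hCarleson f hdiff
  -- lower bound for left side
  have hLHS : ENNReal.ofReal (Real.exp (-(p*r^2/2))) * μ (Metric.ball w r)
      ≤ ∫⁻ z, ENNReal.ofReal (‖f z‖ ^ p * Real.exp (-(p * ‖z‖ ^ 2 / 2))) ∂μ := by
    calc ENNReal.ofReal (Real.exp (-(p*r^2/2))) * μ (Metric.ball w r)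
        = ∫⁻ _z in Metric.ball w r, ENNReal.ofReal (Real.exp (-(p*r^2/2))) ∂μ := by
          rw [setLIntegral_const]
      _ ≤ ∫⁻ z in Metric.ball w r,
            ENNReal.ofReal (‖f z‖ ^ p * Real.exp (-(p * ‖z‖ ^ 2 / 2))) ∂μ := by
          apply setLIntegral_mono' Metric.isOpen_ball.measurableSet
          intro z hz
          rw [hfdef, fock_keyid n p w z]
          apply ENNReal.ofReal_le_ofReal
          apply Real.exp_le_exp.mpr
          have hdz : ‖z - w‖ < r := by rwa [Metric.mem_ball, dist_eq_norm] at hz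
          have h2 : ‖z - w‖^2 ≤ r^2 := by nlinarith [norm_nonneg (z-w)]
          nlinarith [hp]
      _ ≤ ∫⁻ z, ENNReal.ofReal (‖f z‖ ^ p * Real.exp (-(p * ‖z‖ ^ 2 / 2))) ∂μ :=
          setLIntegral_le_lintegral _ _
  have htrans : (∫⁻ z : EuclideanSpace ℂ (Fin n),
      ENNReal.ofReal (Real.exp (-(p/4) * ‖z - w‖^2))) = ENNReal.ofReal K := by
    rw [hKdef, ofReal_integral_eq_lintegral_ofReal hint
      (ae_of_all _ fun v => (Real.exp_pos _).le)]
    simp_rw [sub_eq_add_neg]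
    exact lintegral_add_right_eq_self
      (fun v => ENNReal.ofReal (Real.exp (-(p/4) * ‖v‖^2))) (-w)
  -- upper bound for right side
  have hRHS : (∫⁻ z, ENNReal.ofReal (‖f z‖ ^ p * Real.exp (-(p * ‖z‖ ^ 2 / 2)) *
        (1 + ‖z‖) ^ (-α)))
      ≤ ENNReal.ofReal ((1+‖w‖)^(-α) * Real.exp (α^2/p)) * ENNReal.ofReal K := by
    calc (∫⁻ z, ENNReal.ofReal (‖f z‖ ^ p * Real.exp (-(p * ‖z‖ ^ 2 / 2)) *
          (1 + ‖z‖) ^ (-α)))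
        ≤ ∫⁻ z, ENNReal.ofReal (((1+‖w‖)^(-α) * Real.exp (α^2/p))
            * Real.exp (-(p/4) * ‖z - w‖^2)) := by
          apply lintegral_mono
          intro z
          apply ENNReal.ofReal_le_ofReal
          rw [hfdef, fock_keyid n p w z]
          have h1 : (1+‖z‖) ^ (-α) ≤ (1+‖w‖) ^ (-α) * (1+‖z-w‖) ^ |α| := by
            apply fock_step1 (norm_nonneg z) (norm_nonneg w) (norm_nonneg (z-w))
            · calc ‖z‖ = ‖w + (z-w)‖ := by congr 1; abel
                _ ≤ ‖w‖ + ‖z-w‖ := norm_add_le _ _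
            · calc ‖w‖ = ‖z + (w-z)‖ := by congr 1; abel
                _ ≤ ‖z‖ + ‖w-z‖ := norm_add_le _ _
                _ = ‖z‖ + ‖z-w‖ := by rw [norm_sub_rev]
          have h2 := fock_step2 (d := ‖z-w‖) (α := α) hp (norm_nonneg _)
          have hw0 : (0:ℝ) ≤ (1+‖w‖) ^ (-α) := Real.rpow_nonneg (by positivity) _
          calc Real.exp (-(p * ‖z - w‖^2 / 2)) * (1 + ‖z‖) ^ (-α)
              ≤ Real.exp (-(p * ‖z - w‖^2 / 2)) * ((1+‖w‖) ^ (-α) * (1+‖z-w‖) ^ |α|) := by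
                have := (Real.exp_pos (-(p * ‖z - w‖^2 / 2))).le
                gcongr
            _ = (1+‖w‖) ^ (-α) * ((1+‖z-w‖) ^ |α| * Real.exp (-(p * ‖z-w‖^2 / 2))) := by ring
            _ ≤ (1+‖w‖) ^ (-α) * (Real.exp (α^2/p) * Real.exp (-(p/4 * ‖z-w‖^2))) := by gcongr
            _ = ((1+‖w‖) ^ (-α) * Real.exp (α^2/p)) * Real.exp (-(p/4) * ‖z-w‖^2) := by
                rw [neg_mul]; ring
      _ = ENNReal.ofReal ((1+‖w‖)^(-α) * Real.exp (α^2/p))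
            * ∫⁻ z, ENNReal.ofReal (Real.exp (-(p/4) * ‖z - w‖^2)) := by
          have hnn : (0:ℝ) ≤ (1+‖w‖)^(-α) * Real.exp (α^2/p) := by positivity
          simp_rw [ENNReal.ofReal_mul hnn]
          rw [lintegral_const_mul' _ _ ENNReal.ofReal_ne_top]
      _ = ENNReal.ofReal ((1+‖w‖)^(-α) * Real.exp (α^2/p)) * ENNReal.ofReal K := by
          rw [htrans]
  -- combine
  have hcomb : ENNReal.ofReal (Real.exp (-(p*r^2/2))) * μ (Metric.ball w r)
      ≤ ENNReal.ofReal C * (ENNReal.ofReal ((1+‖w‖)^(-α) * Real.exp (α^2/p))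
        * ENNReal.ofReal K) :=
    le_trans (le_trans hLHS hcar) (mul_le_mul_right hRHS _)
  have hexp1 : ENNReal.ofReal (Real.exp (p*r^2/2)) * ENNReal.ofReal (Real.exp (-(p*r^2/2))) = 1 := by
    rw [← ENNReal.ofReal_mul (Real.exp_pos _).le, ← Real.exp_add]
    simp
  calc μ (Metric.ball w r)
      = ENNReal.ofReal (Real.exp (p*r^2/2))
        * (ENNReal.ofReal (Real.exp (-(p*r^2/2))) * μ (Metric.ball w r)) := by
        rw [← mul_assoc, hexp1, one_mul]
    _ ≤ ENNReal.ofReal (Real.exp (p*r^2/2)) * (ENNReal.ofReal C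
        * (ENNReal.ofReal ((1+‖w‖)^(-α) * Real.exp (α^2/p)) * ENNReal.ofReal K)) :=
        mul_le_mul_right hcomb _
    _ = ENNReal.ofReal (Real.exp (p*r^2/2) * (C * (((1+‖w‖)^(-α) * Real.exp (α^2/p)) * K))) := by
        rw [← ENNReal.ofReal_mul (show (0:ℝ) ≤ (1+‖w‖)^(-α) * Real.exp (α^2/p) by positivity),
          ← ENNReal.ofReal_mul hC.le, ← ENNReal.ofReal_mul (Real.exp_pos _).le]
    _ ≤ ENNReal.ofReal ((C * Real.exp (α^2/p) * (K+1) * Real.exp (p*r^2/2)) * (1 + ‖w‖) ^ (-α)) := by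
        apply ENNReal.ofReal_le_ofReal
        have hw0 : (0:ℝ) ≤ (1+‖w‖) ^ (-α) := Real.rpow_nonneg (by positivity) _
        have hE1 := (Real.exp_pos (p*r^2/2)).le
        have hE2 := (Real.exp_pos (α^2/p)).le
        nlinarith [mul_nonneg (mul_nonneg (mul_nonneg hC.le hE2) hE1) hw0]
end
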